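/- arXiv:1101.5911 — 4 statements merged into one kernel-verified Lean document; each statement's English description precedes it below -/
import Mathlib

section
/- For all w, w' ∈ W and any reduced word w' = s₁s₂⋯s_k (with sᵢ ∈ S), one has (π_{s₁} ∘ π_{s₂} ∘ ⋯ ∘ π_{s_k})(w⁻¹w₀) = w₀ if and only if w ≤ w' in the Bruhat order. -/
/- Context: `(W, S)` is a Coxeter system with `W` finite (encoded by a Coxeter matrix `M` over
the index type `B`, so that `S = {cs.simple i : i : B}`), `cs.length` is the length function and
`w₀` is the longest element of `W`.  The Bruhat order: `v ≤ w` iff some reduced word for `w`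
contains a subword which is a reduced word for `v`.
For `s ∈ S`, `π_s : W → W` is `π_s v = s * v` if `ℓ(s * v) = ℓ(v) + 1` and `π_s v = v`
otherwise. -/

/-- The Bruhat order on `W`. -/
def BruhatLE {B W : Type*} [Group W] {M : CoxeterMatrix B} (cs : CoxeterSystem M W)
    (v w : W) : Prop :=
  ∃ ω : List B, cs.IsReduced ω ∧ cs.wordProd ω = w ∧
    ∃ ω' : List B, ω'.Sublist ω ∧ cs.IsReduced ω' ∧ cs.wordProd ω' = v

/-- The operator `π_s` for the simple reflection `s = cs.simple i`. -/
noncomputable def piOp {B W : Type*} [Group W] {M : CoxeterMatrix B} (cs : CoxeterSystem M W)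
    (i : B) (v : W) : W :=
  if cs.length (cs.simple i * v) = cs.length v + 1 then cs.simple i * v else v


open List

namespace Stmt3Aux

variable {B W : Type*} [Group W] {M : CoxeterMatrix B} (cs : CoxeterSystem M W)

local prefix:100 "σ" => cs.simple
local prefix:100 "π" => cs.wordProd
local prefix:100 "ℓ" => cs.length

open scoped Classical

private lemma conj_cancel (i : B) (t : W) : σ i * (σ i * t * σ i) * σ i = t := by
  simp [mul_assoc, cs.simple_mul_simple_cancel_left, cs.simple_mul_simple_cancel_right]

private lemma conj_eq_simple_iff (i : B) (t : W) : σ i * t * σ i = σ i ↔ t = σ i := by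
  constructor
  · intro h
    have := congrArg (fun x => σ i * x * σ i) h
    simpa [conj_cancel, mul_assoc, cs.simple_mul_simple_cancel_left,
      cs.simple_mul_simple_cancel_right] using this
  · rintro rfl
    simp [cs.simple_mul_simple_cancel_right]

/-- The basic permutation of `W × Bool` associated to a simple reflection. -/
noncomputable def eta (i : B) : Equiv.Perm (W × Bool) where
  toFun p := (σ i * p.1 * σ i, if p.1 = σ i then !p.2 else p.2)
  invFun p := (σ i * p.1 * σ i, if p.1 = σ i then !p.2 else p.2)
  left_inv p := by
    obtain ⟨t, ε⟩ := p
    have h1 := conj_cancel cs i t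
    have h2 := conj_eq_simple_iff cs i t
    by_cases h : t = σ i <;> simp [h1, h2, h]
  right_inv p := by
    obtain ⟨t, ε⟩ := p
    have h1 := conj_cancel cs i t
    have h2 := conj_eq_simple_iff cs i t
    by_cases h : t = σ i <;> simp [h1, h2, h]

lemma eta_apply (i : B) (t : W) (ε : Bool) :
    eta cs i (t, ε) = (σ i * t * σ i, if t = σ i then !ε else ε) := rfl

/-- Product of the `eta` permutations along a word. -/
noncomputable def etaProd (α : List B) : Equiv.Perm (W × Bool) :=
  (α.map (eta cs)).prod

@[simp] lemma etaProd_nil : etaProd cs ([] : List B) = 1 := rfl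

lemma etaProd_cons (i : B) (α : List B) :
    etaProd cs (i :: α) = eta cs i * etaProd cs α := by
  simp [etaProd]

/-- The key computation: action of `etaProd` in terms of the right inversion sequence. -/
lemma etaProd_apply (α : List B) (t : W) (ε : Bool) :
    etaProd cs α (t, ε) = (π α * t * (π α)⁻¹,
      if Odd ((cs.rightInvSeq α).count t) then !ε else ε) := by
  induction α generalizing ε with
  | nil => simp
  | cons i α ih =>
    rw [etaProd_cons, Equiv.Perm.mul_apply, ih, eta_apply]
    have hris : cs.rightInvSeq (i :: α) = ((π α)⁻¹ * σ i * π α) :: cs.rightInvSeq α := rfl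
    have hfst : σ i * (π α * t * (π α)⁻¹) * σ i = π (i :: α) * t * (π (i :: α))⁻¹ := by
      rw [cs.wordProd_cons]
      simp [mul_assoc, mul_inv_rev, cs.inv_simple]
    have hcond : (π α * t * (π α)⁻¹ = σ i) ↔ (t = (π α)⁻¹ * σ i * π α) := by
      constructor
      · intro h; rw [← h]; simp [mul_assoc]
      · intro h; rw [h]; simp [mul_assoc]
    rw [hris, List.count_cons, Prod.mk.injEq]
    refine ⟨hfst, ?_⟩
    simp only [beq_iff_eq]
    by_cases h : t = (π α)⁻¹ * σ i * π α
    · rw [if_pos (hcond.mpr h), if_pos h.symm]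
      rcases Nat.even_or_odd ((cs.rightInvSeq α).count t) with he | ho
      · rw [if_neg (by simpa using he), if_pos (by simp [Nat.odd_add_one, he])]
      · rw [if_pos ho, if_neg (by simp [Nat.odd_add_one, Nat.not_even_iff_odd.mpr ho])]
        simp
    · rw [if_neg (fun hc => h (hcond.mp hc)),
        show (if (π α)⁻¹ * σ i * π α = t then 1 else 0) = 0 from if_neg (fun hc => h hc.symm)]
      simp


section Braid

variable (i j : B)

private lemma sj_mul_c_pow (k : ℕ) : σ j * (σ i * σ j) ^ k = ((σ i * σ j)⁻¹) ^ k * σ j := by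
  induction k with
  | zero => simp
  | succ k ih =>
    have key : σ j * (σ i * σ j) = (σ i * σ j)⁻¹ * σ j := by
      simp [mul_inv_rev, cs.inv_simple, mul_assoc, cs.simple_mul_simple_cancel_left]
    calc σ j * (σ i * σ j) ^ (k+1) = (σ j * (σ i * σ j) ^ k) * (σ i * σ j) := by
          rw [pow_succ, mul_assoc]
      _ = ((σ i * σ j)⁻¹) ^ k * (σ j * (σ i * σ j)) := by rw [ih]; group
      _ = ((σ i * σ j)⁻¹) ^ k * ((σ i * σ j)⁻¹ * σ j) := by rw [key]
      _ = ((σ i * σ j)⁻¹) ^ (k+1) * σ j := by rw [pow_succ]; group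

private lemma c_pow_inv_mul_sj (k : ℕ) :
    ((σ i * σ j) ^ k)⁻¹ * σ j = σ j * (σ i * σ j) ^ k := by
  rw [sj_mul_c_pow, inv_pow]

/-- Closed formula for the right inversion sequence of an alternating word. -/
private lemma ris_alternating (n : ℕ) :
    cs.rightInvSeq (CoxeterSystem.alternatingWord i j n) =
      ((List.range n).reverse).map (fun q => σ j * (σ i * σ j) ^ q) := by
  induction n with
  | zero => simp [CoxeterSystem.alternatingWord]
  | succ n ih =>
    rw [CoxeterSystem.alternatingWord_succ' i j n]
    have hris : cs.rightInvSeq ((if Even n then j else i) :: CoxeterSystem.alternatingWord i j n)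
        = ((π (CoxeterSystem.alternatingWord i j n))⁻¹ * σ (if Even n then j else i)
            * π (CoxeterSystem.alternatingWord i j n)) :: cs.rightInvSeq
            (CoxeterSystem.alternatingWord i j n) := rfl
    rw [hris, ih, List.range_succ, List.reverse_append]
    simp only [List.reverse_cons, List.reverse_nil, List.nil_append, List.map_cons,
      List.cons_append, List.singleton_append]
    congr 1
    rw [cs.prod_alternatingWord_eq_mul_pow i j n]
    rcases Nat.even_or_odd n with he | ho
    · rw [if_pos he, if_pos he]
      obtain ⟨a, rfl⟩ := he
      have hd : (a + a) / 2 = a := by omega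
      simp only [one_mul, mul_inv_rev, hd]
      rw [c_pow_inv_mul_sj, mul_assoc, ← pow_add]
    · rw [if_neg (Nat.not_even_iff_odd.mpr ho), if_neg (Nat.not_even_iff_odd.mpr ho)]
      obtain ⟨a, rfl⟩ := ho
      have hd : (2 * a + 1) / 2 = a := by omega
      rw [hd, mul_inv_rev, cs.inv_simple, c_pow_inv_mul_sj]
      have h3 : σ j * (σ i * σ j) ^ a * σ i * (σ j * (σ i * σ j) ^ a)
          = σ j * ((σ i * σ j) ^ a * ((σ i * σ j) * (σ i * σ j) ^ a)) := by
        simp [mul_assoc]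
      rw [h3, ← pow_succ', ← pow_add]
      have he : a + (a + 1) = 2 * a + 1 := by omega
      rw [he]

private lemma etaProd_alternating_two_mul (k : ℕ) :
    (eta cs i * eta cs j) ^ k = etaProd cs (CoxeterSystem.alternatingWord i j (2 * k)) := by
  induction k with
  | zero => simp [CoxeterSystem.alternatingWord]
  | succ k ih =>
    have h2 : 2 * (k + 1) = (2 * k + 1) + 1 := by omega
    rw [h2, CoxeterSystem.alternatingWord_succ' i j (2 * k + 1),
      CoxeterSystem.alternatingWord_succ' i j (2 * k)]
    rw [if_neg (by simp [Nat.even_add_one, parity_simps]), if_pos (by simp [parity_simps])]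
    rw [etaProd_cons, etaProd_cons, ← ih, pow_succ']
    rw [mul_assoc]

/-- The braid relation for the permutations `eta`. -/
lemma eta_liftable : M.IsLiftable (fun i => eta cs i) := by
  intro i j
  rw [etaProd_alternating_two_mul]
  apply Equiv.ext
  rintro ⟨t, ε⟩
  rw [etaProd_apply]
  have hprod : π (CoxeterSystem.alternatingWord i j (2 * M i j)) = 1 := by
    rw [cs.prod_alternatingWord_eq_mul_pow i j]
    rw [if_pos (by simp [parity_simps])]
    rw [one_mul]
    have : 2 * M i j / 2 = M i j := by omega
    rw [this, cs.simple_mul_simple_pow]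
  have hcount : ¬ Odd ((cs.rightInvSeq (CoxeterSystem.alternatingWord i j (2 * M i j))).count t) := by
    rw [ris_alternating, List.map_reverse, List.count_reverse]
    have h2 : 2 * M i j = M i j + M i j := by omega
    rw [h2, List.range_add, List.map_append, List.count_append]
    have hmap : (List.map (fun q => σ j * (σ i * σ j) ^ q)
        (List.map (fun x => M i j + x) (List.range (M i j))))
        = List.map (fun q => σ j * (σ i * σ j) ^ q) (List.range (M i j)) := by
      rw [List.map_map]
      apply List.map_congr_left
      intro a _
      simp only [Function.comp_apply]
      rw [pow_add, cs.simple_mul_simple_pow]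
      simp
    rw [hmap]
    rcases Nat.even_or_odd ((List.map (fun q => σ j * (σ i * σ j) ^ q)
        (List.range (M i j))).count t) with hc | hc
    · simp [Nat.odd_add, hc, Nat.not_odd_iff_even.mpr hc]
    · simp [Nat.odd_add, hc, Nat.not_even_iff_odd.mpr hc]
  rw [hprod, if_neg hcount]
  simp

end Braid

/-- The homomorphism `W →* Perm (W × Bool)`. -/
noncomputable def Phi : W →* Equiv.Perm (W × Bool) :=
  cs.lift ⟨fun i => eta cs i, eta_liftable cs⟩

lemma Phi_simple (i : B) : Phi cs (σ i) = eta cs i := by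
  simp [Phi]

lemma Phi_wordProd (α : List B) : Phi cs (π α) = etaProd cs α := by
  induction α with
  | nil => simp [etaProd]
  | cons i α ih => rw [cs.wordProd_cons, map_mul, Phi_simple, ih, etaProd_cons]

/-- The cocycle: parity of the number of times `t` occurs in right inversion sequences. -/
noncomputable def ecoc (w t : W) : Bool := (Phi cs w (t, false)).2

lemma Phi_apply (w t : W) (ε : Bool) :
    Phi cs w (t, ε) = (w * t * w⁻¹, if ecoc cs w t then !ε else ε) := by
  obtain ⟨α, rfl⟩ := cs.wordProd_surjective w
  rw [Phi_wordProd, etaProd_apply, ecoc, Phi_wordProd, etaProd_apply]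
  by_cases ho : Odd ((cs.rightInvSeq α).count t) <;> simp [ho]

lemma ecoc_count (α : List B) (t : W) :
    ecoc cs (π α) t = if Odd ((cs.rightInvSeq α).count t) then true else false := by
  rw [ecoc, Phi_wordProd, etaProd_apply]
  by_cases ho : Odd ((cs.rightInvSeq α).count t) <;> simp [ho]

lemma ecoc_mul (x y t : W) :
    ecoc cs (x * y) t = if ecoc cs x (y * t * y⁻¹) then !(ecoc cs y t) else ecoc cs y t := by
  have := congrArg Prod.snd (Phi_apply cs x (y * t * y⁻¹) (ecoc cs y t))
  rw [ecoc, map_mul, Equiv.Perm.mul_apply]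
  rw [show (Phi cs y) (t, false) = (y * t * y⁻¹, ecoc cs y t) by
    rw [Phi_apply]; simp [ecoc]]
  rw [Phi_apply]

lemma ecoc_one (t : W) : ecoc cs 1 t = false := by
  rw [ecoc]; simp

lemma ecoc_simple (k : B) (t : W) : ecoc cs (σ k) t = if t = σ k then true else false := by
  rw [ecoc, Phi_simple, eta_apply]
  by_cases h : t = σ k <;> simp [h]


lemma length_simple_mul_ge (w : W) (i : B) : ℓ w ≤ ℓ (σ i * w) + 1 := by
  rcases cs.length_simple_mul w i with h | h <;> omega

lemma length_mul_simple_ge (w : W) (i : B) : ℓ w ≤ ℓ (w * σ i) + 1 := by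
  rcases cs.length_mul_simple w i with h | h <;> omega

/-- If `ℓ(tv) > ℓ(v)` then the cocycle vanishes. -/
lemma ecoc_eq_false : ∀ n (v t : W), ℓ v ≤ n → ℓ v < ℓ (t * v) → ecoc cs v⁻¹ t = false := by
  intro n
  induction n with
  | zero =>
    intro v t hv hlt
    have hv1 : v = 1 := cs.length_eq_zero_iff.mp (Nat.le_zero.mp hv)
    rw [hv1]
    simp [ecoc_one]
  | succ n ih =>
    intro v t hv hlt
    by_cases hv1 : v = 1
    · rw [hv1]; simp [ecoc_one]
    · obtain ⟨j, hj⟩ := cs.exists_leftDescent_of_ne_one hv1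
      have hjlt : ℓ (σ j * v) < ℓ v := hj
      have hvinv : v⁻¹ = (σ j * v)⁻¹ * σ j := by
        rw [mul_inv_rev, cs.inv_simple, mul_assoc, cs.simple_mul_simple_self, mul_one]
      have htj : t ≠ σ j := by
        intro h
        rw [h] at hlt
        omega
      have key : ecoc cs v⁻¹ t = ecoc cs (σ j * v)⁻¹ (σ j * t * σ j) := by
        rw [hvinv, ecoc_mul, cs.inv_simple, ecoc_simple, if_neg htj]
        cases hb : ecoc cs (σ j * v)⁻¹ (σ j * t * σ j) <;> simp [hb]
      rw [key]
      apply ih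
      · omega
      · have h1 : σ j * t * σ j * (σ j * v) = σ j * (t * v) := by
          simp [mul_assoc, cs.simple_mul_simple_cancel_left]
        rw [h1]
        have h2 := length_simple_mul_ge cs (t * v) j
        omega

/-- `ecoc t t = true` for reflections `t`. -/
lemma ecoc_refl_aux : ∀ (χ : List B) (k : B),
    ecoc cs (π χ * σ k * (π χ)⁻¹) (π χ * σ k * (π χ)⁻¹) = true := by
  intro χ
  induction χ with
  | nil =>
    intro k
    simp only [CoxeterSystem.wordProd_nil, one_mul, inv_one, mul_one]
    rw [ecoc_simple, if_pos rfl]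
  | cons j χ ih =>
    intro k
    set t' := π χ * σ k * (π χ)⁻¹ with ht'
    have ht'refl : cs.IsReflection t' := ⟨π χ, k, rfl⟩
    have hts : π (j :: χ) * σ k * (π (j :: χ))⁻¹ = σ j * t' * σ j := by
      rw [cs.wordProd_cons, ht']
      simp [mul_assoc, mul_inv_rev, cs.inv_simple]
    rw [hts]
    set t := σ j * t' * σ j with ht
    have htt' : σ j * t * σ j = t' := by
      rw [ht]
      simp [mul_assoc, cs.simple_mul_simple_cancel_left, cs.simple_mul_simple_cancel_right]
    have hdec : t = σ j * (t' * σ j) := by rw [ht, mul_assoc]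
    have hinv : t'⁻¹ = t' := ht'refl.inv
    have hsq : t' * t' = 1 := ht'refl.mul_self
    have hc : ∀ x : W, t' * (t' * x) = x := fun x => by rw [← mul_assoc, hsq, one_mul]
    have hconj : t' * σ j * (σ j * (t' * σ j)) * (t' * σ j)⁻¹ = t' := by
      rw [mul_inv_rev, cs.inv_simple, hinv]
      simp [mul_assoc, cs.simple_mul_simple_cancel_left, hsq, hc]
    have hX : σ j * (σ j * (t' * σ j)) * (σ j)⁻¹ = t' := by
      rw [cs.inv_simple]
      simp [mul_assoc, cs.simple_mul_simple_cancel_left, cs.simple_mul_simple_self]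
    rw [hdec, ecoc_mul, hconj, ecoc_mul, hX]
    have iht : ecoc cs t' t' = true := ih k
    rw [iht, ecoc_simple, ecoc_simple]
    by_cases hb : t' = σ j
    · have hb2 : σ j * (t' * σ j) = σ j := by
        rw [hb]
        simp [cs.simple_mul_simple_cancel_left]
      simp [hb, hb2]
    · have hb2 : σ j * (t' * σ j) ≠ σ j := by
        intro hcon
        apply hb
        have h3 := congrArg (fun x => σ j * x) hcon
        simp only [cs.simple_mul_simple_cancel_left, cs.simple_mul_simple_self] at h3
        have h4 := congrArg (fun x => x * σ j) h3
        simp only [cs.simple_mul_simple_cancel_right] at h4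
        rw [h4]
        simp [cs.simple_mul_simple_self]
      simp [hb, hb2]

lemma ecoc_refl {t : W} (ht : cs.IsReflection t) : ecoc cs t t = true := by
  obtain ⟨x, k, rfl⟩ := ht
  obtain ⟨χ, rfl⟩ := cs.wordProd_surjective x
  exact ecoc_refl_aux cs χ k

/-- If `ℓ(tv) < ℓ(v)` for a reflection `t`, the cocycle is `true`. -/
lemma ecoc_eq_true {v t : W} (ht : cs.IsReflection t) (h : ℓ (t * v) < ℓ v) :
    ecoc cs v⁻¹ t = true := by
  have hv : v⁻¹ = (t * v)⁻¹ * t := by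
    rw [mul_inv_rev]
    have : t⁻¹ = t := ht.inv
    rw [this, mul_assoc]
    have : t * t = 1 := ht.mul_self
    rw [this, mul_one]
  rw [hv, ecoc_mul]
  have h1 : t * t * t⁻¹ = t := by
    rw [ht.mul_self, one_mul, ht.inv]
  rw [h1]
  have h2 : ecoc cs (t * v)⁻¹ t = false := by
    apply ecoc_eq_false cs (ℓ (t * v)) _ _ le_rfl
    have : t * (t * v) = v := by rw [← mul_assoc, ht.mul_self, one_mul]
    rw [this]
    exact h
  rw [h2, ecoc_refl cs ht]
  simp

/-- Strong exchange property. -/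
lemma strong_exchange {ω : List B} {t : W} (ht : cs.IsReflection t)
    (h : ℓ (t * π ω) < ℓ (π ω)) :
    ∃ k, k < ω.length ∧ π (ω.eraseIdx k) = t * π ω := by
  have h1 : ecoc cs (π ω)⁻¹ t = true := ecoc_eq_true cs ht h
  have h2 : (π (ω.reverse)) = (π ω)⁻¹ := cs.wordProd_reverse ω
  rw [← h2, ecoc_count] at h1
  have h3 : Odd ((cs.rightInvSeq ω.reverse).count t) := by
    by_contra hc
    rw [if_neg hc] at h1
    exact Bool.false_ne_true h1
  have h4 : t ∈ cs.rightInvSeq ω.reverse := by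
    apply List.count_pos_iff.mp
    rcases h3 with ⟨m, hm⟩
    omega
  rw [cs.rightInvSeq_reverse, List.mem_reverse] at h4
  obtain ⟨k, hk, hEq⟩ := List.mem_iff_getElem.mp h4
  have hklen : k < ω.length := by
    have := cs.length_leftInvSeq ω
    omega
  refine ⟨k, hklen, ?_⟩
  have h5 := cs.getD_leftInvSeq_mul_wordProd ω k
  rw [List.getD_eq_getElem _ _ hk, hEq] at h5
  exact h5.symm

/-- Simple (left) exchange with reducedness. -/
lemma simple_exchange {ω : List B} (hred : cs.IsReduced ω) (i : B)
    (h : ℓ (σ i * π ω) < ℓ (π ω)) :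
    ∃ β : List B, β.Sublist ω ∧ cs.IsReduced β ∧ π β = σ i * π ω := by
  obtain ⟨k, hk, hEq⟩ := strong_exchange cs (cs.isReflection_simple i) h
  refine ⟨ω.eraseIdx k, List.eraseIdx_sublist ω k, ?_, hEq⟩
  unfold CoxeterSystem.IsReduced
  rw [hEq]
  have hlen : (ω.eraseIdx k).length + 1 = ω.length := List.length_eraseIdx_add_one hk
  have hred' : ℓ (π ω) = ω.length := hred
  rcases cs.length_simple_mul (π ω) i with h1 | h1 <;> omega

/-- Simple right exchange with reducedness. -/
lemma simple_exchange_right {ω : List B} (hred : cs.IsReduced ω) (i : B)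
    (h : ℓ (π ω * σ i) < ℓ (π ω)) :
    ∃ β : List B, β.Sublist ω ∧ cs.IsReduced β ∧ π β = π ω * σ i := by
  have hrev : cs.IsReduced ω.reverse := (cs.isReduced_reverse_iff ω).mpr hred
  have hcond : ℓ (σ i * π ω.reverse) < ℓ (π ω.reverse) := by
    rw [cs.wordProd_reverse]
    have h1 : σ i * (π ω)⁻¹ = (π ω * σ i)⁻¹ := by
      rw [mul_inv_rev, cs.inv_simple]
    rw [h1, cs.length_inv, cs.length_inv]
    exact h
  obtain ⟨β', hsub, hredβ, hprod⟩ := simple_exchange cs hrev i hcond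
  refine ⟨β'.reverse, ?_, (cs.isReduced_reverse_iff β').mpr hredβ, ?_⟩
  · have := hsub.reverse
    rwa [List.reverse_reverse] at this
  · rw [cs.wordProd_reverse, hprod, cs.wordProd_reverse, mul_inv_rev, cs.inv_simple, inv_inv]

lemma isReduced_nil : cs.IsReduced ([] : List B) := by
  unfold CoxeterSystem.IsReduced
  simp

/-- Deletion property: every word has a reduced sublist with the same product. -/
lemma deletion_aux : ∀ (n : ℕ) (α : List B), α.length ≤ n →
    ∃ β : List B, β.Sublist α ∧ cs.IsReduced β ∧ π β = π α := by
  intro n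
  induction n with
  | zero =>
    intro α hα
    have : α = [] := List.length_eq_zero_iff.mp (Nat.le_zero.mp hα)
    subst this
    exact ⟨[], List.Sublist.refl _, isReduced_nil cs, rfl⟩
  | succ n ih =>
    intro α hα
    by_cases hred : cs.IsReduced α
    · exact ⟨α, List.Sublist.refl _, hred, rfl⟩
    · have hne : α ≠ [] := by
        intro h; subst h; exact hred (isReduced_nil cs)
      have hlen0 : 0 < α.length := List.length_pos_iff.mpr hne
      have hex : ∃ m, ¬ cs.IsReduced (α.take (m + 1)) := by
        refine ⟨α.length - 1, ?_⟩
        have : α.length - 1 + 1 = α.length := by omega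
        rw [this, List.take_length]
        exact hred
      classical
      set j := Nat.find hex with hjdef
      have hj : ¬ cs.IsReduced (α.take (j + 1)) := Nat.find_spec hex
      have hjlt : j < α.length := by
        have : j ≤ α.length - 1 := Nat.find_le (by
          have : α.length - 1 + 1 = α.length := by omega
          rw [this, List.take_length]; exact hred)
        omega
      have hjred : cs.IsReduced (α.take j) := by
        rcases Nat.eq_zero_or_pos j with h0 | h0
        · rw [h0]
          simpa using isReduced_nil cs
        · have := Nat.find_min hex (m := j - 1) (by omega)
          rw [not_not] at this
          have hj1 : j - 1 + 1 = j := by omega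
          rwa [hj1] at this
      have htake : α.take (j + 1) = α.take j ++ [α[j]] := by
        rw [List.take_succ, List.getElem?_eq_getElem hjlt]
        rfl
      have hlentake : (α.take j).length = j := by
        rw [List.length_take]
        omega
      have hprodtake : π (α.take (j+1)) = π (α.take j) * σ (α[j]) := by
        rw [htake, cs.wordProd_append, cs.wordProd_singleton]
      have hlt : ℓ (π (α.take j) * σ (α[j])) < ℓ (π (α.take j)) := by
        have hne1 : ℓ (π (α.take (j+1))) ≠ (α.take (j+1)).length := hj
        have hlen1 : (α.take (j+1)).length = j + 1 := by
          rw [List.length_take]; omega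
        rw [hlen1] at hne1
        rw [hprodtake] at hne1
        have hredj : ℓ (π (α.take j)) = j := by rw [hjred, hlentake]
        rcases cs.length_mul_simple (π (α.take j)) (α[j]) with h1 | h1 <;> omega
      obtain ⟨β₁, hsubβ₁, hredβ₁, hprodβ₁⟩ := simple_exchange_right cs hjred (α[j]) hlt
      set α' := β₁ ++ α.drop (j+1) with hα'
      have hredj : ℓ (π (α.take j)) = j := by rw [hjred, hlentake]
      have hlenβ₁ : β₁.length + 1 = j := by
        have h1 : ℓ (π β₁) = β₁.length := hredβ₁
        rw [hprodβ₁] at h1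
        rcases cs.length_mul_simple (π (α.take j)) (α[j]) with hd | hd <;> omega
      have hproda : π α' = π α := by
        rw [hα', cs.wordProd_append, hprodβ₁, ← hprodtake, ← cs.wordProd_append,
          List.take_append_drop]
      have hsuba : α'.Sublist α := by
        rw [hα']
        calc β₁ ++ α.drop (j+1) <+ α.take (j+1) ++ α.drop (j+1) := by
              apply List.Sublist.append _ (List.Sublist.refl _)
              calc β₁ <+ α.take j := hsubβ₁
                _ <+ α.take (j+1) := by rw [htake]; exact List.sublist_append_left _ _
          _ = α := List.take_append_drop _ _
      have hlena : α'.length ≤ n := by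
        rw [hα', List.length_append, List.length_drop]
        omega
      obtain ⟨β, hs, hr, hp⟩ := ih α' hlena
      exact ⟨β, hs.trans hsuba, hr, by rw [hp, hproda]⟩

lemma deletion (α : List B) :
    ∃ β : List B, β.Sublist α ∧ cs.IsReduced β ∧ π β = π α :=
  deletion_aux cs α.length α le_rfl


/-! ### Subwords -/

/-- `v` is representable by a reduced subword of `ω`. -/
def SubRed (v : W) (ω : List B) : Prop :=
  ∃ τ : List B, τ.Sublist ω ∧ cs.IsReduced τ ∧ π τ = v

lemma sublist_cons_cases {τ ω₁ : List B} {i : B} (h : τ.Sublist (i :: ω₁)) :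
    τ.Sublist ω₁ ∨ ∃ τ₁, τ = i :: τ₁ ∧ τ₁.Sublist ω₁ := by
  cases h with
  | cons _ h => exact Or.inl h
  | cons_cons _ h => exact Or.inr ⟨_, rfl, h⟩

lemma subRed_nil_iff (v : W) : SubRed cs v [] ↔ v = 1 := by
  constructor
  · rintro ⟨τ, hs, _, hp⟩
    rw [List.sublist_nil.mp hs] at hp
    rw [← hp, cs.wordProd_nil]
  · rintro rfl
    exact ⟨[], List.Sublist.refl _, isReduced_nil cs, cs.wordProd_nil⟩

/-- Subwords are closed under taking left descents. -/
lemma subRed_descent {v : W} {ω : List B} (i : B) (h : SubRed cs v ω)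
    (hd : ℓ (σ i * v) < ℓ v) : SubRed cs (σ i * v) ω := by
  obtain ⟨τ, hs, hr, hp⟩ := h
  obtain ⟨β, hsb, hrb, hpb⟩ := simple_exchange cs hr i (by rw [hp]; exact hd)
  exact ⟨β, hsb.trans hs, hrb, by rw [hpb, hp]⟩

/-- The fundamental recursion for subwords. -/
lemma subRed_cons_iff (i : B) (ω₁ : List B) (v : W) :
    SubRed cs v (i :: ω₁) ↔ SubRed cs (if ℓ (σ i * v) < ℓ v then σ i * v else v) ω₁ := by
  constructor
  · rintro ⟨τ, hs, hr, hp⟩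
    rcases sublist_cons_cases hs with hsub | ⟨τ₁, rfl, hsub⟩
    · by_cases hd : ℓ (σ i * v) < ℓ v
      · rw [if_pos hd]
        exact subRed_descent cs i ⟨τ, hsub, hr, hp⟩ hd
      · rw [if_neg hd]
        exact ⟨τ, hsub, hr, hp⟩
    · rw [cs.wordProd_cons] at hp
      have hr' : ℓ (σ i * π τ₁) = τ₁.length + 1 := by
        have := hr
        unfold CoxeterSystem.IsReduced at this
        rw [cs.wordProd_cons] at this
        simpa using this
      have hle : ℓ (π τ₁) ≤ τ₁.length := cs.length_wordProd_le τ₁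
      have hτ₁len : ℓ (π τ₁) = τ₁.length := by
        rcases cs.length_simple_mul (π τ₁) i with hdi | hdi <;> omega
      have hτ₁red : cs.IsReduced τ₁ := hτ₁len
      have hd : ℓ (σ i * v) < ℓ v := by
        rw [← hp, cs.simple_mul_simple_cancel_left, hτ₁len, hr']
        omega
      rw [if_pos hd]
      refine ⟨τ₁, hsub, hτ₁red, ?_⟩
      rw [← hp, cs.simple_mul_simple_cancel_left]
  · intro h
    by_cases hd : ℓ (σ i * v) < ℓ v
    · rw [if_pos hd] at h
      obtain ⟨τ₁, hs, hr, hp⟩ := h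
      refine ⟨i :: τ₁, hs.cons₂ i, ?_, ?_⟩
      · unfold CoxeterSystem.IsReduced
        rw [cs.wordProd_cons, hp, cs.simple_mul_simple_cancel_left]
        have h1 : ℓ (π τ₁) = τ₁.length := hr
        rw [hp] at h1
        rcases cs.length_simple_mul v i with h2 | h2 <;>
          simp only [List.length_cons] <;> omega
      · rw [cs.wordProd_cons, hp, cs.simple_mul_simple_cancel_left]
    · rw [if_neg hd] at h
      obtain ⟨τ, hs, hr, hp⟩ := h
      exact ⟨τ, hs.cons i, hr, hp⟩

lemma subRed_reverse {v : W} {ω : List B} (h : SubRed cs v ω) :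
    SubRed cs v⁻¹ ω.reverse := by
  obtain ⟨τ, hs, hr, hp⟩ := h
  exact ⟨τ.reverse, hs.reverse, (cs.isReduced_reverse_iff τ).mpr hr,
    by rw [cs.wordProd_reverse, hp]⟩

/-! ### The chain order -/

/-- One (not necessarily covering) step downward in the Bruhat order. -/
def BStep (a b : W) : Prop := (∃ t, cs.IsReflection t ∧ a = t * b) ∧ ℓ a < ℓ b

/-- Chain version of the Bruhat order. -/
def Ble (v w : W) : Prop := Relation.ReflTransGen (BStep cs) v w

/-- The chain order implies the subword condition in EVERY reduced word. -/
lemma ble_subRed {v w : W} (h : Ble cs v w) :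
    ∀ σl : List B, cs.IsReduced σl → π σl = w → SubRed cs v σl := by
  induction h using Relation.ReflTransGen.head_induction_on with
  | refl => exact fun σl hr hp => ⟨σl, List.Sublist.refl _, hr, hp⟩
  | head hstep _ ih =>
    intro σl hr hp
    obtain ⟨τc, hsτ, hrc, hpc⟩ := ih σl hr hp
    obtain ⟨⟨t, htrefl, haeq⟩, hlen⟩ := hstep
    obtain ⟨k, hk, heq⟩ := strong_exchange cs htrefl
      (show ℓ (t * π τc) < ℓ (π τc) by rw [hpc, ← haeq]; exact hlen)
    obtain ⟨β, hsb, hrb, hpb⟩ := deletion cs (τc.eraseIdx k)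
    refine ⟨β, (hsb.trans (List.eraseIdx_sublist τc k)).trans hsτ, hrb, ?_⟩
    rw [hpb, heq, hpc, ← haeq]

lemma isReduced_cons {i : B} {ω₁ : List B} (h : cs.IsReduced (i :: ω₁)) :
    cs.IsReduced ω₁ ∧ ℓ (σ i * π ω₁) = ℓ (π ω₁) + 1 := by
  have h1 : ℓ (σ i * π ω₁) = ω₁.length + 1 := by
    have := h
    unfold CoxeterSystem.IsReduced at this
    rw [cs.wordProd_cons] at this
    simpa using this
  have hle : ℓ (π ω₁) ≤ ω₁.length := cs.length_wordProd_le ω₁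
  have hlen : ℓ (π ω₁) = ω₁.length := by
    rcases cs.length_simple_mul (π ω₁) i with hdi | hdi <;> omega
  exact ⟨hlen, by omega⟩

lemma bstep_simple (i : B) (w : W) (h : ℓ (σ i * w) < ℓ w) : BStep cs (σ i * w) w :=
  ⟨⟨σ i, cs.isReflection_simple i, rfl⟩, h⟩

lemma bstep_simple' (i : B) (w : W) (h : ℓ w < ℓ (σ i * w)) : BStep cs w (σ i * w) :=
  ⟨⟨σ i, cs.isReflection_simple i, by rw [cs.simple_mul_simple_cancel_left]⟩, h⟩

/-- The main mutual induction: subword implies chain, plus the two lifting lemmas. -/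
lemma main_induction : ∀ n : ℕ,
    (∀ ω : List B, 2 * ω.length + 1 ≤ n → cs.IsReduced ω →
      ∀ v, SubRed cs v ω → Ble cs v (π ω)) ∧
    (∀ u y : W, ∀ i : B, 2 * ℓ y + 2 ≤ n → Ble cs u y → ℓ u < ℓ (σ i * u) →
      ℓ y < ℓ (σ i * y) → Ble cs (σ i * u) (σ i * y)) ∧
    (∀ u z : W, ∀ i : B, 2 * ℓ z + 2 ≤ n → Ble cs u z → ℓ u < ℓ (σ i * u) →
      ℓ (σ i * z) < ℓ z → Ble cs (σ i * u) z) := by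
  intro n
  induction n using Nat.strong_induction_on with
  | _ n IH =>
  refine ⟨?_, ?_, ?_⟩
  · -- P1
    intro ω hn hred v hsub
    cases ω with
    | nil =>
      rw [(subRed_nil_iff cs v).mp hsub, cs.wordProd_nil]
      exact Relation.ReflTransGen.refl
    | cons i ω₁ =>
      obtain ⟨hred₁, hasc⟩ := isReduced_cons cs hred
      have hlen₁ : ℓ (π ω₁) = ω₁.length := hred₁
      have hlenω : (i :: ω₁).length = ω₁.length + 1 := rfl
      rw [hlenω] at hn
      have hsub2 := (subRed_cons_iff cs i ω₁ v).mp hsub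
      have hnpos : 1 ≤ n := by omega
      have hstep : BStep cs (π ω₁) (π (i :: ω₁)) := by
        rw [cs.wordProd_cons]
        exact bstep_simple' cs i (π ω₁) (by omega)
      by_cases hd : ℓ (σ i * v) < ℓ v
      · rw [if_pos hd] at hsub2
        have hble : Ble cs (σ i * v) (π ω₁) :=
          (IH (n-1) (by omega)).1 ω₁ (by omega) hred₁ _ hsub2
        have hlift := (IH (n-1) (by omega)).2.1 (σ i * v) (π ω₁) i
          (by omega) hble
          (by rw [cs.simple_mul_simple_cancel_left]; exact hd)
          (by omega)
        rw [cs.simple_mul_simple_cancel_left, ← cs.wordProd_cons] at hlift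
        exact hlift
      · rw [if_neg hd] at hsub2
        have hble : Ble cs v (π ω₁) :=
          (IH (n-1) (by omega)).1 ω₁ (by omega) hred₁ _ hsub2
        exact hble.tail hstep
  · -- LIFT1
    intro u y i hn hble hau hay
    rcases Relation.ReflTransGen.cases_tail hble with heq | ⟨z, hbz, hstep⟩
    · rw [heq]
      exact Relation.ReflTransGen.refl
    · obtain ⟨⟨t, ht, hzeq⟩, hlz⟩ := hstep
      rcases Nat.lt_or_ge (ℓ (σ i * z)) (ℓ z) with hdz | haz'
      · -- descent of z : use LIFT2
        have h2 := (IH (n-1) (by omega)).2.2 u z i (by omega) hbz hau hdz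
        have s1 : BStep cs z y := ⟨⟨t, ht, hzeq⟩, hlz⟩
        have s2 : BStep cs y (σ i * y) := bstep_simple' cs i y hay
        exact (h2.tail s1).tail s2
      · have haz : ℓ z < ℓ (σ i * z) :=
          lt_of_le_of_ne haz' (cs.length_simple_mul_ne z i).symm
        have h1 := (IH (n-1) (by omega)).2.1 u z i (by omega) hbz hau haz
        have hlsz : ℓ (σ i * z) = ℓ z + 1 := by
          rcases cs.length_simple_mul z i with h | h <;> omega
        have s1 : BStep cs (σ i * z) (σ i * y) := by
          refine ⟨⟨σ i * t * σ i, ?_, ?_⟩, ?_⟩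
          · have := ht.conj (σ i)
            rwa [cs.inv_simple] at this
          · rw [hzeq]
            simp [mul_assoc, cs.simple_mul_simple_cancel_left]
          · have hay' : ℓ (σ i * y) = ℓ y + 1 := by
              rcases cs.length_simple_mul y i with h | h <;> omega
            omega
        exact h1.tail s1
  · -- LIFT2
    intro u z i hn hble hau hdz
    obtain ⟨ζ₀, hζred0, hζprod⟩ := cs.exists_isReduced (σ i * z)
    have hζlen : ζ₀.length = ℓ (σ i * z) := by rw [hζprod]; exact hζred0.symm
    have hζ₀red : cs.IsReduced ζ₀ := by
      unfold CoxeterSystem.IsReduced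
      rw [← hζprod, hζlen]
    have hζp : π (i :: ζ₀) = z := by
      rw [cs.wordProd_cons, ← hζprod, cs.simple_mul_simple_cancel_left]
    have hzilen : ℓ (σ i * z) + 1 = ℓ z := by
      rcases cs.length_simple_mul z i with h1 | h1 <;> omega
    have hζred : cs.IsReduced (i :: ζ₀) := by
      unfold CoxeterSystem.IsReduced
      rw [hζp]
      simp only [List.length_cons]
      omega
    obtain ⟨τ, hs, hr, hp⟩ := ble_subRed cs hble (i :: ζ₀) hζred hζp
    rcases sublist_cons_cases hs with hsub | ⟨τ₁, rfl, hsub⟩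
    · have hsir : cs.IsReduced (i :: τ) := by
        unfold CoxeterSystem.IsReduced
        rw [cs.wordProd_cons, hp]
        have h1 : ℓ (π τ) = τ.length := hr
        rw [hp] at h1
        simp only [List.length_cons]
        rcases cs.length_simple_mul u i with h2 | h2 <;> omega
      have hsubred : SubRed cs (σ i * u) (i :: ζ₀) :=
        ⟨i :: τ, hsub.cons₂ i, hsir, by rw [cs.wordProd_cons, hp]⟩
      have := (IH (n-1) (by omega)).1 (i :: ζ₀)
        (by simp only [List.length_cons]; omega) hζred _ hsubred
      rwa [hζp] at this
    · exfalso
      rw [cs.wordProd_cons] at hp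
      have h1 : ℓ (π (i :: τ₁)) = (i :: τ₁).length := hr
      rw [cs.wordProd_cons] at h1
      simp only [List.length_cons] at h1
      have hle : ℓ (π τ₁) ≤ τ₁.length := cs.length_wordProd_le τ₁
      have hu : σ i * u = π τ₁ := by rw [← hp, cs.simple_mul_simple_cancel_left]
      have hu2 : u = σ i * π τ₁ := by rw [← hu, cs.simple_mul_simple_cancel_left]
      have e1 : ℓ u = τ₁.length + 1 := by rw [hu2]; exact h1
      have e2 : ℓ (σ i * u) ≤ τ₁.length := by rw [hu]; exact hle
      omega



/-- Subword implies chain order. -/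
lemma subRed_ble {ω : List B} (hred : cs.IsReduced ω) {v : W} (h : SubRed cs v ω) :
    Ble cs v (π ω) :=
  (main_induction cs (2 * ω.length + 1)).1 ω le_rfl hred v h

/-! ### Inversion counting and the longest element -/

lemma mem_leftInvSeq_of_inversion {ω : List B} {t : W} (ht : cs.IsReflection t)
    (h : ℓ (t * π ω) < ℓ (π ω)) : t ∈ cs.leftInvSeq ω := by
  have h1 : ecoc cs (π ω)⁻¹ t = true := ecoc_eq_true cs ht h
  have h2 : (π (ω.reverse)) = (π ω)⁻¹ := cs.wordProd_reverse ω
  rw [← h2, ecoc_count] at h1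
  have h3 : Odd ((cs.rightInvSeq ω.reverse).count t) := by
    by_contra hc
    rw [if_neg hc] at h1
    exact Bool.false_ne_true h1
  have h4 : t ∈ cs.rightInvSeq ω.reverse := by
    apply List.count_pos_iff.mp
    rcases h3 with ⟨m, hm⟩
    omega
  rwa [cs.rightInvSeq_reverse, List.mem_reverse] at h4

lemma ecoc_iff {v t : W} (ht : cs.IsReflection t) :
    ecoc cs v⁻¹ t = true ↔ ℓ (t * v) < ℓ v := by
  constructor
  · intro h
    by_contra hc
    have hne : ℓ (t * v) ≠ ℓ v := ht.length_mul_right_ne v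
    have hgt : ℓ v < ℓ (t * v) := by omega
    rw [ecoc_eq_false cs (ℓ v) v t le_rfl hgt] at h
    exact Bool.false_ne_true h
  · exact ecoc_eq_true cs ht

/-- The number of left inversions equals the length. -/
lemma ncard_inversions (w : W) :
    {t : W | cs.IsReflection t ∧ ℓ (t * w) < ℓ w}.ncard = ℓ w := by
  obtain ⟨ω, hred, rfl⟩ := cs.exists_reduced_word' w
  have hset : {t : W | cs.IsReflection t ∧ ℓ (t * π ω) < ℓ (π ω)}
      = {t : W | t ∈ cs.leftInvSeq ω} := by
    ext t
    constructor
    · rintro ⟨ht, hlt⟩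
      exact mem_leftInvSeq_of_inversion cs ht hlt
    · intro ht
      exact cs.isLeftInversion_of_mem_leftInvSeq hred ht
  rw [hset]
  have hnodup : (cs.leftInvSeq ω).Nodup := hred.nodup_leftInvSeq
  have hcoe : {t : W | t ∈ cs.leftInvSeq ω} = ↑(cs.leftInvSeq ω).toFinset := by
    ext t; simp
  rw [hcoe, Set.ncard_coe_finset, List.toFinset_card_of_nodup hnodup,
    cs.length_leftInvSeq, hred]

section W0

variable [Finite W] (w₀ : W)

/-- Every reflection is a left inversion of the longest element. -/
lemma refl_inversion_w0 (hw₀ : ∀ w : W, ℓ w ≤ ℓ w₀) {t : W} (ht : cs.IsReflection t) :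
    ℓ (t * w₀) < ℓ w₀ :=
  lt_of_le_of_ne (hw₀ (t * w₀)) (ht.length_mul_right_ne w₀)

lemma inversions_w0 (hw₀ : ∀ w : W, ℓ w ≤ ℓ w₀) : {t : W | cs.IsReflection t ∧ ℓ (t * w₀) < ℓ w₀}
    = {t : W | cs.IsReflection t} := by
  ext t
  exact ⟨fun h => h.1, fun h => ⟨h, refl_inversion_w0 cs w₀ hw₀ h⟩⟩

/-- The key length formula: `ℓ(u) + ℓ(u⁻¹ w₀) = ℓ(w₀)`. -/
lemma length_inv_mul_w0 (hw₀ : ∀ w : W, ℓ w ≤ ℓ w₀) (u : W) :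
    ℓ u + ℓ (u⁻¹ * w₀) = ℓ w₀ := by
  have hsetEq : {t : W | cs.IsReflection t ∧ ℓ (t * (u⁻¹ * w₀)) < ℓ (u⁻¹ * w₀)}
      = {t : W | cs.IsReflection t} \ {t : W | cs.IsReflection t ∧ ℓ (t * u⁻¹) < ℓ (u⁻¹)} := by
    ext t
    simp only [Set.mem_setOf_eq, Set.mem_diff]
    constructor
    · rintro ⟨ht, hlt⟩
      refine ⟨ht, ?_⟩
      rintro ⟨-, hlt2⟩
      have h1 : ecoc cs (u⁻¹ * w₀)⁻¹ t = true := by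
        rw [ecoc_iff cs ht]; exact hlt
      have h2 : ecoc cs u t = true := by
        have := (ecoc_iff cs (v := u⁻¹) ht).mpr hlt2
        rwa [inv_inv] at this
      have h3 : ecoc cs w₀⁻¹ (u * t * u⁻¹) = true := by
        rw [ecoc_iff cs (ht.conj u)]
        exact refl_inversion_w0 cs w₀ hw₀ (ht.conj u)
      rw [mul_inv_rev, inv_inv, ecoc_mul, h2, h3] at h1
      simp at h1
    · rintro ⟨ht, hnot⟩
      refine ⟨ht, ?_⟩
      have hlt2 : ¬ ℓ (t * u⁻¹) < ℓ (u⁻¹) := fun hc => hnot ⟨ht, hc⟩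
      have h2 : ecoc cs u t = false := by
        by_contra hc
        have : ecoc cs u t = true := by
          cases hb : ecoc cs u t
          · exact absurd hb hc
          · rfl
        rw [show u = (u⁻¹)⁻¹ by rw [inv_inv]] at this
        rw [ecoc_iff cs ht] at this
        exact hlt2 this
      have h3 : ecoc cs w₀⁻¹ (u * t * u⁻¹) = true := by
        rw [ecoc_iff cs (ht.conj u)]
        exact refl_inversion_w0 cs w₀ hw₀ (ht.conj u)
      rw [← ecoc_iff cs ht, mul_inv_rev, inv_inv, ecoc_mul, h2, h3]
      simp
  have hsub : {t : W | cs.IsReflection t ∧ ℓ (t * u⁻¹) < ℓ (u⁻¹)}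
      ⊆ {t : W | cs.IsReflection t} := fun t h => h.1
  have hfin : ({t : W | cs.IsReflection t} : Set W).Finite := Set.toFinite _
  have hcard := congrArg Set.ncard hsetEq
  rw [Set.ncard_diff hsub] at hcard
  rw [ncard_inversions] at hcard
  have h1 : {t : W | cs.IsReflection t}.ncard = ℓ w₀ := by
    rw [← inversions_w0 cs w₀ hw₀, ncard_inversions]
  have h2 : {t : W | cs.IsReflection t ∧ ℓ (t * u⁻¹) < ℓ (u⁻¹)}.ncard = ℓ u := by
    rw [ncard_inversions, cs.length_inv]
  rw [h1, h2] at hcard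
  have h3 : ℓ u ≤ ℓ w₀ := hw₀ u
  omega

end W0

end Stmt3Aux

namespace Stmt3Aux

variable {B W : Type*} [Group W] {M : CoxeterMatrix B} (cs : CoxeterSystem M W)

local prefix:100 "σ" => cs.simple
local prefix:100 "π" => cs.wordProd
local prefix:100 "ℓ" => cs.length

open scoped Classical

/-- Greedy right-descent stripping. -/
noncomputable def dstep (i : B) (u : W) : W := if ℓ (u * σ i) < ℓ u then u * σ i else u

section W0

variable [Finite W] (w₀ : W)

lemma foldr_piOp_eq (hw₀ : ∀ w : W, ℓ w ≤ ℓ w₀) (ω : List B) (w : W) :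
    ω.foldr (piOp cs) (w⁻¹ * w₀) = (ω.foldr (dstep cs) w)⁻¹ * w₀ := by
  induction ω with
  | nil => rfl
  | cons i ω ih =>
    rw [List.foldr_cons, List.foldr_cons, ih]
    set m := ω.foldr (dstep cs) w with hm
    rw [piOp, dstep]
    have key : σ i * (m⁻¹ * w₀) = (m * σ i)⁻¹ * w₀ := by
      rw [mul_inv_rev, cs.inv_simple, mul_assoc]
    have l1 : ℓ m + ℓ (m⁻¹ * w₀) = ℓ w₀ := length_inv_mul_w0 cs w₀ hw₀ m
    have l2 : ℓ (m * σ i) + ℓ ((m * σ i)⁻¹ * w₀) = ℓ w₀ := length_inv_mul_w0 cs w₀ hw₀ _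
    rcases cs.length_mul_simple m i with hd | hd
    · rw [if_neg (by rw [key]; omega), if_neg (by omega)]
    · rw [if_pos (by rw [key]; omega), if_pos (by omega), key]

end W0

lemma subRed_reverse_iff (v : W) (ω : List B) :
    SubRed cs v ω ↔ SubRed cs v⁻¹ ω.reverse := by
  constructor
  · exact subRed_reverse cs
  · intro h
    have := subRed_reverse cs h
    rwa [inv_inv, List.reverse_reverse] at this

lemma subRed_concat_iff (i : B) (ω₁ : List B) (w : W) :
    SubRed cs w (ω₁ ++ [i]) ↔ SubRed cs (dstep cs i w) ω₁ := by
  rw [subRed_reverse_iff cs w]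
  have hrev : (ω₁ ++ [i]).reverse = i :: ω₁.reverse := by simp
  rw [hrev, subRed_cons_iff cs i ω₁.reverse w⁻¹]
  have hinv : σ i * w⁻¹ = (w * σ i)⁻¹ := by rw [mul_inv_rev, cs.inv_simple]
  have hlen : ℓ (σ i * w⁻¹) = ℓ (w * σ i) := by rw [hinv, cs.length_inv]
  have hlenw : ℓ (w⁻¹ : W) = ℓ w := cs.length_inv w
  rw [subRed_reverse_iff cs (dstep cs i w) ω₁]
  rw [dstep]
  by_cases hd : ℓ (w * σ i) < ℓ w
  · rw [if_pos (by omega), if_pos hd, hinv]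
  · rw [if_neg (by omega), if_neg hd]

lemma dstep_foldr_eq_one_iff (ω : List B) : ∀ w : W,
    (ω.foldr (dstep cs) w = 1) ↔ SubRed cs w ω := by
  induction ω using List.reverseRecOn with
  | nil =>
    intro w
    simp only [List.foldr_nil]
    exact ⟨fun h => (subRed_nil_iff cs w).mpr h, fun h => (subRed_nil_iff cs w).mp h⟩
  | append_singleton ω₁ i ih =>
    intro w
    rw [List.foldr_append, List.foldr_cons, List.foldr_nil, ih (dstep cs i w),
      subRed_concat_iff]

end Stmt3Aux

open Classical in
theorem stmt3 {B W : Type*} [Group W] [Finite W] {M : CoxeterMatrix B}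
    (cs : CoxeterSystem M W)
    (w₀ : W) (hw₀ : ∀ w : W, cs.length w ≤ cs.length w₀) :
    ∀ w w' : W, ∀ ω : List B, cs.IsReduced ω → cs.wordProd ω = w' →
      (ω.foldr (piOp cs) (w⁻¹ * w₀) = w₀ ↔ BruhatLE cs w w') := by
  intro w w' ω hred hprod
  have e1 : ω.foldr (piOp cs) (w⁻¹ * w₀) = (ω.foldr (Stmt3Aux.dstep cs) w)⁻¹ * w₀ :=
    Stmt3Aux.foldr_piOp_eq cs w₀ hw₀ ω w
  constructor
  · intro h
    rw [e1] at h
    have hm : ω.foldr (Stmt3Aux.dstep cs) w = 1 := by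
      have h2 : (ω.foldr (Stmt3Aux.dstep cs) w)⁻¹ * w₀ = 1 * w₀ := by rw [one_mul]; exact h
      have h3 := mul_right_cancel h2
      exact inv_eq_one.mp h3
    obtain ⟨τ, hs, hr, hp⟩ := (Stmt3Aux.dstep_foldr_eq_one_iff cs ω w).mp hm
    exact ⟨ω, hred, hprod, τ, hs, hr, hp⟩
  · rintro ⟨σl, hrσ, hpσ, τ, hsτ, hrτ, hpτ⟩
    have hsr : Stmt3Aux.SubRed cs w σl := ⟨τ, hsτ, hrτ, hpτ⟩
    have hble : Stmt3Aux.Ble cs w w' := by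
      have := Stmt3Aux.subRed_ble cs hrσ hsr
      rwa [hpσ] at this
    have hsr2 : Stmt3Aux.SubRed cs w ω := Stmt3Aux.ble_subRed cs hble ω hred hprod
    rw [e1, (Stmt3Aux.dstep_foldr_eq_one_iff cs ω w).mpr hsr2]
    simp
end

section
/- Let M be a monoid and φ : W → M a map such that φ(u·v) = φ(u)·φ(v) whenever ℓ(u·v) = ℓ(u) + ℓ(v), and φ(s)·φ(s) = φ(s) for every s ∈ S. If w, w' ∈ W satisfy w ≤ w' in the Bruhat order, then φ(w')·φ(w⁻¹w₀) = φ(w₀). -/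
/- Context: `(W, S)` is a Coxeter system with `W` finite (encoded by a Coxeter matrix `M` over
the index type `B`, so that `S = {cs.simple i : i : B}`), `cs.length` is the length function and
`w₀` is the longest element of `W`.  The Bruhat order: `v ≤ w` iff some reduced word for `w`
contains a subword which is a reduced word for `v`. -/

open List

set_option linter.unusedSectionVars false
namespace MyCox

variable {B W : Type*} [Group W] [DecidableEq W] {M : CoxeterMatrix B} (cs : CoxeterSystem M W)

lemma conj_simple_eq_iff (c : B) (t : W) :
    cs.simple c * t * cs.simple c = cs.simple c ↔ t = cs.simple c := by
  constructor
  · intro h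
    have h2 : t = (cs.simple c)⁻¹ * (cs.simple c * t * cs.simple c) * (cs.simple c)⁻¹ := by
      group
    rw [h, cs.inv_simple] at h2
    simpa [mul_assoc, cs.simple_mul_simple_self] using h2
  · intro h; rw [h, cs.simple_mul_simple_self, one_mul]

lemma conj_conj_simple (c : B) (t : W) :
    cs.simple c * (cs.simple c * t * cs.simple c) * cs.simple c = t := by
  rw [← mul_assoc, ← mul_assoc, cs.simple_mul_simple_self, one_mul, mul_assoc,
    cs.simple_mul_simple_self, mul_one]

/-- The standard sign permutation on `W × ℤˣ` attached to a simple reflection. -/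
def sgnPerm (c : B) : Equiv.Perm (W × ℤˣ) where
  toFun x := (cs.simple c * x.1 * cs.simple c, if x.1 = cs.simple c then -x.2 else x.2)
  invFun x := (cs.simple c * x.1 * cs.simple c, if x.1 = cs.simple c then -x.2 else x.2)
  left_inv := by
    rintro ⟨t, e⟩
    by_cases h : t = cs.simple c
    · subst h
      simp [cs.simple_mul_simple_self, conj_simple_eq_iff]
    · have h2 : ¬ (cs.simple c * t * cs.simple c = cs.simple c) := by
        rw [conj_simple_eq_iff]; exact h
      simp only [if_neg h, if_neg h2, conj_conj_simple]
  right_inv := by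
    rintro ⟨t, e⟩
    by_cases h : t = cs.simple c
    · subst h
      simp [cs.simple_mul_simple_self, conj_simple_eq_iff]
    · have h2 : ¬ (cs.simple c * t * cs.simple c = cs.simple c) := by
        rw [conj_simple_eq_iff]; exact h
      simp only [if_neg h, if_neg h2, conj_conj_simple]

lemma sgnPerm_apply (c : B) (t : W) (e : ℤˣ) :
    sgnPerm cs c (t, e) = (cs.simple c * t * cs.simple c, if t = cs.simple c then -e else e) :=
  rfl

lemma prod_sgnPerm_apply (γ : List B) (t : W) (e : ℤˣ) :
    ((γ.map (sgnPerm cs)).prod) (t, e) =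
      (cs.wordProd γ * t * (cs.wordProd γ)⁻¹, (-1 : ℤˣ)^((cs.rightInvSeq γ).count t) * e) := by
  induction γ generalizing t e with
  | nil => simp
  | cons c γ ih =>
      rw [List.map_cons, List.prod_cons, Equiv.Perm.mul_apply, ih, sgnPerm_apply]
      have hris : cs.rightInvSeq (c :: γ) =
          ((cs.wordProd γ)⁻¹ * cs.simple c * cs.wordProd γ) :: cs.rightInvSeq γ := rfl
      rw [hris, List.count_cons]
      have hr : ∀ x : W, cs.wordProd (c :: γ) * x * (cs.wordProd (c :: γ))⁻¹ =
          cs.simple c * (cs.wordProd γ * x * (cs.wordProd γ)⁻¹) * cs.simple c := by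
        intro x
        rw [cs.wordProd_cons, mul_inv_rev, cs.inv_simple]
        group
      by_cases h : t = (cs.wordProd γ)⁻¹ * cs.simple c * cs.wordProd γ
      · have h1 : cs.wordProd γ * t * (cs.wordProd γ)⁻¹ = cs.simple c := by rw [h]; group
        rw [if_pos h1, Prod.mk.injEq]
        constructor
        · rw [hr, h1]
        · have : ((cs.wordProd γ)⁻¹ * cs.simple c * cs.wordProd γ == t) = true := by
            rw [beq_iff_eq, h]
          rw [this]
          simp only [if_true]
          rw [pow_succ, mul_assoc, neg_one_mul, mul_neg]
      · have h1 : ¬ (cs.wordProd γ * t * (cs.wordProd γ)⁻¹ = cs.simple c) := by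
          intro hc
          apply h
          have : t = (cs.wordProd γ)⁻¹ * (cs.wordProd γ * t * (cs.wordProd γ)⁻¹) * cs.wordProd γ := by
            group
          rw [hc] at this
          exact this
        rw [if_neg h1, Prod.mk.injEq]
        constructor
        · rw [hr]
        · have : ((cs.wordProd γ)⁻¹ * cs.simple c * cs.wordProd γ == t) = false := by
            rw [beq_eq_false_iff_ne]
            exact fun hc => h hc.symm
          rw [this]
          simp

end MyCox
-- chunk 2 : liftability, Phi, eta
namespace MyCox
variable {B W : Type*} [Group W] [DecidableEq W] {M : CoxeterMatrix B} (cs : CoxeterSystem M W)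

def altList (i j : B) : ℕ → List B
  | 0 => []
  | m + 1 => i :: j :: altList i j m

lemma prod_map_sgnPerm_altList (i j : B) (m : ℕ) :
    ((altList i j m).map (sgnPerm cs)).prod = (sgnPerm cs i * sgnPerm cs j) ^ m := by
  induction m with
  | zero => rfl
  | succ m ih =>
      show (sgnPerm cs i :: sgnPerm cs j :: (altList i j m).map (sgnPerm cs)).prod = _
      rw [List.prod_cons, List.prod_cons, ih, pow_succ']
      rw [mul_assoc]

lemma wordProd_altList (i j : B) (m : ℕ) :
    cs.wordProd (altList i j m) = (cs.simple i * cs.simple j) ^ m := by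
  induction m with
  | zero => simp [altList]
  | succ m ih =>
      show cs.wordProd (i :: j :: altList i j m) = _
      rw [cs.wordProd_cons, cs.wordProd_cons, ih, pow_succ']
      rw [mul_assoc]

lemma flip_pow (i j : B) (m : ℕ) :
    cs.simple j * (cs.simple i * cs.simple j) ^ m
      = (cs.simple j * cs.simple i) ^ m * cs.simple j := by
  induction m with
  | zero => simp
  | succ m ih =>
      rw [pow_succ, ← mul_assoc, ih, pow_succ]
      group

lemma pow_simple_inv (i j : B) (m : ℕ) :
    ((cs.simple i * cs.simple j) ^ m)⁻¹ = (cs.simple j * cs.simple i) ^ m := by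
  rw [← inv_pow, mul_inv_rev, cs.inv_simple, cs.inv_simple]

lemma ris_altList (i j : B) (m : ℕ) :
    cs.rightInvSeq (altList i j m) =
      ((List.range (2 * m)).reverse).map
        (fun k => (cs.simple j * cs.simple i) ^ k * cs.simple j) := by
  induction m with
  | zero => simp [altList]
  | succ m ih =>
      have hris : cs.rightInvSeq (altList i j (m + 1)) =
          ((cs.wordProd (j :: altList i j m))⁻¹ * cs.simple i * cs.wordProd (j :: altList i j m))
            :: ((cs.wordProd (altList i j m))⁻¹ * cs.simple j * cs.wordProd (altList i j m))
            :: cs.rightInvSeq (altList i j m) := rfl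
      have h2m : 2 * (m + 1) = (2 * m + 1) + 1 := by ring
      rw [hris, ih, h2m, List.range_succ, List.range_succ, List.reverse_append,
        List.reverse_append]
      simp only [List.reverse_singleton, List.singleton_append, List.map_cons]
      congr 1
      · -- head entry
        rw [cs.wordProd_cons, wordProd_altList, mul_inv_rev, pow_simple_inv, cs.inv_simple]
        have L2 : (cs.simple i * cs.simple j) ^ m * cs.simple i
            = cs.simple i * (cs.simple j * cs.simple i) ^ m := (flip_pow cs j i m).symm
        calc (cs.simple j * cs.simple i) ^ m * cs.simple j * cs.simple i *
              (cs.simple j * (cs.simple i * cs.simple j) ^ m)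
            = (cs.simple j * cs.simple i) ^ m * (cs.simple j * cs.simple i) *
              (cs.simple j * (cs.simple i * cs.simple j) ^ m) := by group
          _ = (cs.simple j * cs.simple i) ^ m * (cs.simple j * cs.simple i) *
              ((cs.simple j * cs.simple i) ^ m * cs.simple j) := by rw [flip_pow]
          _ = (cs.simple j * cs.simple i) ^ (2 * m + 1) * cs.simple j := by
              rw [show 2 * m + 1 = (m + 1) + m by ring, pow_add, pow_succ]
              group
      congr 1
      · -- second entry
        rw [wordProd_altList, pow_simple_inv]
        calc (cs.simple j * cs.simple i) ^ m * cs.simple j * (cs.simple i * cs.simple j) ^ m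
            = (cs.simple j * cs.simple i) ^ m * ((cs.simple j * cs.simple i) ^ m * cs.simple j) := by
              rw [mul_assoc, flip_pow]
          _ = (cs.simple j * cs.simple i) ^ (2 * m) * cs.simple j := by
              rw [two_mul, pow_add]; group

lemma count_ris_altList_even (i j : B) (t : W) :
    Even ((cs.rightInvSeq (altList i j (M i j))).count t) := by
  rw [ris_altList, List.map_reverse, List.count_reverse, two_mul, List.range_add,
    List.map_append, List.count_append, List.map_map]
  have hc : List.map ((fun k => (cs.simple j * cs.simple i) ^ k * cs.simple j) ∘
      (fun k => M i j + k)) (List.range (M i j))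
      = List.map (fun k => (cs.simple j * cs.simple i) ^ k * cs.simple j)
        (List.range (M i j)) := by
    apply List.map_congr_left
    intro k _
    show (cs.simple j * cs.simple i) ^ (M i j + k) * cs.simple j = _
    rw [pow_add, cs.simple_mul_simple_pow' i j, one_mul]
  rw [hc]
  exact ⟨_, rfl⟩

lemma isLiftable_sgnPerm : M.IsLiftable (sgnPerm cs) := by
  intro i j
  apply Equiv.ext
  rintro ⟨t, e⟩
  rw [← prod_map_sgnPerm_altList, prod_sgnPerm_apply, wordProd_altList,
    cs.simple_mul_simple_pow i j, Even.neg_one_pow (count_ris_altList_even cs i j t)]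
  simp

noncomputable def Phi : W →* Equiv.Perm (W × ℤˣ) :=
  CoxeterSystem.lift cs ⟨sgnPerm cs, isLiftable_sgnPerm cs⟩

lemma Phi_wordProd (γ : List B) : Phi cs (cs.wordProd γ) = (γ.map (sgnPerm cs)).prod := by
  unfold CoxeterSystem.wordProd
  rw [MonoidHom.map_list_prod, List.map_map]
  congr 1
  apply List.map_congr_left
  intro c _
  exact cs.lift_apply_simple (isLiftable_sgnPerm cs) c

noncomputable def eta (w t : W) : ℤˣ := ((Phi cs w) (t, 1)).2

lemma eta_wordProd (γ : List B) (t : W) :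
    eta cs (cs.wordProd γ) t = (-1 : ℤˣ) ^ ((cs.rightInvSeq γ).count t) := by
  unfold eta
  rw [Phi_wordProd, prod_sgnPerm_apply, mul_one]

lemma Phi_apply (w t : W) (e : ℤˣ) :
    Phi cs w (t, e) = (w * t * w⁻¹, eta cs w t * e) := by
  obtain ⟨γ, hγ⟩ := cs.wordProd_surjective w
  subst hγ
  rw [Phi_wordProd, prod_sgnPerm_apply, eta_wordProd]

lemma eta_mul (u v t : W) :
    eta cs (u * v) t = eta cs v t * eta cs u (v * t * v⁻¹) := by
  have h : Phi cs (u * v) (t, 1) = Phi cs u (Phi cs v (t, 1)) := by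
    rw [map_mul]; rfl
  rw [Phi_apply, Phi_apply, Phi_apply] at h
  have := congrArg Prod.snd h
  simp only at this
  simpa [mul_comm] using this

end MyCox
-- chunk 3 : eta facts, strong exchange, reduced sublist extraction
namespace MyCox
variable {B W : Type*} [Group W] [DecidableEq W] {M : CoxeterMatrix B} (cs : CoxeterSystem M W)

lemma eta_one (t : W) : eta cs 1 t = 1 := by
  unfold eta
  rw [map_one]
  rfl

lemma eta_simple_self (i : B) : eta cs (cs.simple i) (cs.simple i) = -1 := by
  unfold eta
  have h : Phi cs (cs.simple i) = sgnPerm cs i := cs.lift_apply_simple (isLiftable_sgnPerm cs) i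
  rw [h, sgnPerm_apply, if_pos rfl]

lemma eta_reflection_self {t : W} (ht : cs.IsReflection t) : eta cs t t = -1 := by
  obtain ⟨w, i, rfl⟩ := ht
  have hc1 : (cs.simple i * w⁻¹) * (w * cs.simple i * w⁻¹) * (cs.simple i * w⁻¹)⁻¹
      = cs.simple i := by group
  have hc2 : w⁻¹ * (w * cs.simple i * w⁻¹) * (w⁻¹)⁻¹ = cs.simple i := by group
  have h0 : eta cs (w * w⁻¹) (w * cs.simple i * w⁻¹)
      = eta cs w⁻¹ (w * cs.simple i * w⁻¹) * eta cs w (cs.simple i) := by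
    rw [eta_mul, hc2]
  have h0' : eta cs (w * w⁻¹) (w * cs.simple i * w⁻¹) = 1 := by
    rw [show w * w⁻¹ = (1 : W) by group, eta_one]
  have hone : eta cs w⁻¹ (w * cs.simple i * w⁻¹) * eta cs w (cs.simple i) = 1 :=
    h0.symm.trans h0'
  calc eta cs (w * cs.simple i * w⁻¹) (w * cs.simple i * w⁻¹)
      = eta cs (w * (cs.simple i * w⁻¹)) (w * cs.simple i * w⁻¹) := by
        rw [show w * (cs.simple i * w⁻¹) = w * cs.simple i * w⁻¹ by group]
    _ = eta cs (cs.simple i * w⁻¹) (w * cs.simple i * w⁻¹) * eta cs w (cs.simple i) := by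
        rw [eta_mul, hc1]
    _ = (eta cs w⁻¹ (w * cs.simple i * w⁻¹) * eta cs (cs.simple i) (cs.simple i))
          * eta cs w (cs.simple i) := by
        rw [eta_mul, hc2]
    _ = -1 := by
        rw [eta_simple_self, mul_right_comm, hone, one_mul]

lemma eta_eq_neg_one_of_isRightInversion {w t : W} (h : cs.IsRightInversion w t) :
    eta cs w t = -1 := by
  rcases Int.units_eq_one_or (eta cs w t) with h1 | h1
  · exfalso
    have hw : w = (w * t) * t := by
      rw [mul_assoc, h.1.mul_self, mul_one]
    have h2 : eta cs w t = eta cs t t * eta cs (w * t) (t * t * t⁻¹) := by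
      nth_rewrite 1 [hw]
      exact eta_mul cs (w * t) t t
    rw [h.1.mul_self, one_mul, eta_reflection_self cs h.1, h1] at h2
    have h3 : eta cs (w * t) t⁻¹ = -1 := by
      rcases Int.units_eq_one_or (eta cs (w * t) t⁻¹) with h4 | h4
      · rw [h4, mul_one] at h2; exact absurd h2.symm (by decide)
      · exact h4
    rw [h.1.inv] at h3
    obtain ⟨ω, hred, hω⟩ := cs.exists_reduced_word' (w * t)
    rw [hω, eta_wordProd] at h3
    have hodd : ¬ Even ((cs.rightInvSeq ω).count t) := by
      intro he
      rw [Even.neg_one_pow he] at h3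
      exact absurd h3.symm (by decide)
    have hmem : t ∈ cs.rightInvSeq ω := by
      rw [← List.count_pos_iff]
      rcases Nat.eq_zero_or_pos ((cs.rightInvSeq ω).count t) with h5 | h5
      · exact absurd (h5 ▸ Even.zero) hodd
      · exact h5
    have hinv := cs.isRightInversion_of_mem_rightInvSeq hred hmem
    rw [← hω] at hinv
    have : cs.length (w * t * t) < cs.length (w * t) := hinv.2
    rw [mul_assoc, h.1.mul_self, mul_one] at this
    exact Nat.lt_asymm h.2 this
  · exact h1

/-- Strong exchange, right version. -/
lemma mem_ris_of_isRightInversion {ω : List B} (hred : cs.IsReduced ω) {t : W}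
    (h : cs.IsRightInversion (cs.wordProd ω) t) : t ∈ cs.rightInvSeq ω := by
  have h1 := eta_eq_neg_one_of_isRightInversion cs h
  rw [eta_wordProd] at h1
  rw [← List.count_pos_iff]
  rcases Nat.eq_zero_or_pos ((cs.rightInvSeq ω).count t) with h5 | h5
  · rw [h5, pow_zero] at h1
    exact absurd h1 (by decide)
  · exact h5

/-- Strong exchange, left version. -/
lemma mem_lis_of_isLeftInversion {ω : List B} (hred : cs.IsReduced ω) {t : W}
    (h : cs.IsLeftInversion (cs.wordProd ω) t) : t ∈ cs.leftInvSeq ω := by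
  have hrev : cs.IsReduced ω.reverse := (cs.isReduced_reverse_iff ω).mpr hred
  have h2 : cs.IsRightInversion (cs.wordProd ω.reverse) t := by
    rw [cs.wordProd_reverse]
    exact cs.isRightInversion_inv_iff.mpr h
  have h3 := mem_ris_of_isRightInversion cs hrev h2
  rw [cs.rightInvSeq_reverse, List.mem_reverse] at h3
  exact h3

/-- From any word one can extract a reduced sublist with the same product. -/
lemma exists_reduced_sublist (γ : List B) :
    ∃ β, β.Sublist γ ∧ cs.IsReduced β ∧ cs.wordProd β = cs.wordProd γ := by
  induction γ with
  | nil => exact ⟨[], List.Sublist.refl [], by simp [CoxeterSystem.IsReduced], rfl⟩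
  | cons c γ ih =>
      obtain ⟨β, hsub, hred, hprod⟩ := ih
      rcases cs.length_simple_mul (cs.wordProd γ) c with hcase | hcase
      · refine ⟨c :: β, List.cons_sublist_cons.mpr hsub, ?_, ?_⟩
        · show cs.length (cs.wordProd (c :: β)) = _
          have hred' : cs.length (cs.wordProd β) = β.length := hred
          rw [cs.wordProd_cons, hprod, hcase, List.length_cons, ← hprod, hred']
        · rw [cs.wordProd_cons, cs.wordProd_cons, hprod]
      · -- descent case
        have hne : cs.length (cs.wordProd γ) ≠ 0 := by
          intro h0
          rw [cs.length_eq_zero_iff] at h0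
          rw [h0, mul_one, cs.length_simple, cs.length_one] at hcase
          omega
        have hlt : cs.length (cs.simple c * cs.wordProd γ) < cs.length (cs.wordProd γ) := by
          omega
        have hinv : cs.IsLeftInversion (cs.wordProd β) (cs.simple c) := by
          refine ⟨cs.isReflection_simple c, ?_⟩
          rw [hprod]
          exact hlt
        have hmem := mem_lis_of_isLeftInversion cs hred hinv
        obtain ⟨k, hk, hkeq⟩ := List.mem_iff_getElem.mp hmem
        have hk' : k < β.length := by
          rw [cs.length_leftInvSeq] at hk
          exact hk
        refine ⟨β.eraseIdx k, ?_, ?_, ?_⟩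
        · exact ((β.eraseIdx_sublist k).trans hsub).trans (List.sublist_cons_self c γ)
        · show cs.length (cs.wordProd (β.eraseIdx k)) = _
          have heq : cs.wordProd (β.eraseIdx k) = cs.simple c * cs.wordProd β := by
            rw [← cs.getD_leftInvSeq_mul_wordProd β k]
            congr 1
            rw [List.getD_eq_getElem _ _ hk, hkeq]
          have hlen : (β.eraseIdx k).length + 1 = β.length := List.length_eraseIdx_add_one hk'
          have hred' : cs.length (cs.wordProd β) = β.length := hred
          rw [hprod] at hred'
          rw [heq, hprod]
          omega
        · rw [cs.wordProd_cons, ← hprod, ← cs.getD_leftInvSeq_mul_wordProd β k,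
            List.getD_eq_getElem _ _ hk, hkeq, hprod]

end MyCox
-- chunk 4 : length additivity at the longest element
namespace MyCox
variable {B W : Type*} [Group W] [DecidableEq W] {M : CoxeterMatrix B} (cs : CoxeterSystem M W)

lemma isRightInversion_longest {w₀ : W} (hw₀ : ∀ w : W, cs.length w ≤ cs.length w₀)
    {t : W} (ht : cs.IsReflection t) : cs.IsRightInversion w₀ t :=
  ⟨ht, lt_of_le_of_ne (hw₀ (w₀ * t)) (ht.length_mul_left_ne w₀)⟩

lemma eta_eq_neg_one_of_mem_ris {ω : List B} (hred : cs.IsReduced ω) {t : W}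
    (h : t ∈ cs.rightInvSeq ω) : eta cs (cs.wordProd ω) t = -1 := by
  rw [eta_wordProd, List.count_eq_one_of_mem hred.nodup_rightInvSeq h, pow_one]

lemma length_add_length_inv_mul_longest (w₀ : W) (hw₀ : ∀ w : W, cs.length w ≤ cs.length w₀)
    (u : W) : cs.length u + cs.length (u⁻¹ * w₀) = cs.length w₀ := by
  set r := u⁻¹ * w₀ with hr
  have hur : u * r = w₀ := by rw [hr]; group
  have htri : cs.length w₀ ≤ cs.length u + cs.length r := by
    rw [← hur]; exact cs.length_mul_le u r
  obtain ⟨ω₀, hred₀, hω₀⟩ := cs.exists_reduced_word' w₀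
  obtain ⟨ωu, hredu, hωu⟩ := cs.exists_reduced_word' u
  obtain ⟨ωr, hredr, hωr⟩ := cs.exists_reduced_word' r
  set S1 : Finset W := (cs.rightInvSeq ωr).toFinset with hS1
  set S2 : Finset W := ((cs.rightInvSeq ωu).toFinset).image (fun x => r⁻¹ * x * r) with hS2
  set T : Finset W := (cs.rightInvSeq ω₀).toFinset with hT
  have hS1card : S1.card = cs.length r := by
    rw [hS1, List.toFinset_card_of_nodup hredr.nodup_rightInvSeq, cs.length_rightInvSeq,
      ← hredr, ← hωr]
  have hS2card : S2.card = cs.length u := by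
    rw [hS2, Finset.card_image_of_injective _ (fun x y hxy => by
      have := mul_left_cancel (mul_right_cancel hxy); exact this),
      List.toFinset_card_of_nodup hredu.nodup_rightInvSeq, cs.length_rightInvSeq,
      ← hredu, ← hωu]
  have hTcard : T.card = cs.length w₀ := by
    rw [hT, List.toFinset_card_of_nodup hred₀.nodup_rightInvSeq, cs.length_rightInvSeq,
      ← hred₀, ← hω₀]
  have hsub1 : S1 ⊆ T := by
    intro t ht
    rw [hS1, List.mem_toFinset] at ht
    have hrefl := cs.isReflection_of_mem_rightInvSeq ωr ht
    rw [hT, List.mem_toFinset]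
    have hinv := isRightInversion_longest cs hw₀ hrefl
    rw [hω₀] at hinv
    exact mem_ris_of_isRightInversion cs hred₀ hinv
  have hsub2 : S2 ⊆ T := by
    intro t ht
    rw [hS2, Finset.mem_image] at ht
    obtain ⟨x, hx, rfl⟩ := ht
    rw [List.mem_toFinset] at hx
    have hrefl := cs.isReflection_of_mem_rightInvSeq ωu hx
    have hrefl2 : cs.IsReflection (r⁻¹ * x * r) := by
      have := hrefl.conj r⁻¹
      rwa [inv_inv] at this
    rw [hT, List.mem_toFinset]
    have hinv := isRightInversion_longest cs hw₀ hrefl2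
    rw [hω₀] at hinv
    exact mem_ris_of_isRightInversion cs hred₀ hinv
  have hdisj : Disjoint S1 S2 := by
    rw [Finset.disjoint_left]
    intro t ht1 ht2
    rw [hS1, List.mem_toFinset] at ht1
    rw [hS2, Finset.mem_image] at ht2
    obtain ⟨x, hx, hxt⟩ := ht2
    rw [List.mem_toFinset] at hx
    have he1 : eta cs r t = -1 := by
      rw [hωr]; exact eta_eq_neg_one_of_mem_ris cs hredr ht1
    have he2 : eta cs u x = -1 := by
      rw [hωu]; exact eta_eq_neg_one_of_mem_ris cs hredu hx
    have hx' : r * t * r⁻¹ = x := by rw [← hxt]; group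
    have he3 : eta cs w₀ t = 1 := by
      rw [← hur, eta_mul, hx', he1, he2]
      decide
    have hrefl := cs.isReflection_of_mem_rightInvSeq ωr ht1
    have he4 : eta cs w₀ t = -1 :=
      eta_eq_neg_one_of_isRightInversion cs (isRightInversion_longest cs hw₀ hrefl)
    rw [he3] at he4
    exact absurd he4 (by decide)
  have hcard : S1.card + S2.card ≤ T.card := by
    rw [← Finset.card_union_of_disjoint hdisj]
    exact Finset.card_le_card (Finset.union_subset hsub1 hsub2)
  rw [hS1card, hS2card, hTcard] at hcard
  omega

end MyCox
-- chunk 5 : Bruhat chains, subword property, lifting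
namespace MyCox
variable {B W : Type*} [Group W] [DecidableEq W] {M : CoxeterMatrix B} (cs : CoxeterSystem M W)

/-- An edge of the Bruhat graph. -/
def Edge (a b : W) : Prop :=
  (∃ t, cs.IsReflection t ∧ b = a * t) ∧ cs.length a < cs.length b

/-- Chain version of the Bruhat order. -/
def Cle : W → W → Prop := Relation.ReflTransGen (Edge cs)

lemma edge_simple_left {u : W} {c : B} (h : cs.length u < cs.length (cs.simple c * u)) :
    Edge cs u (cs.simple c * u) := by
  refine ⟨⟨u⁻¹ * cs.simple c * u, ?_, by group⟩, h⟩
  have := (cs.isReflection_simple c).conj u⁻¹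
  rwa [inv_inv] at this

lemma edge_left_desc {z : W} {c : B} (h : cs.length (cs.simple c * z) < cs.length z) :
    Edge cs (cs.simple c * z) z := by
  refine ⟨⟨(cs.simple c * z)⁻¹ * cs.simple c * (cs.simple c * z), ?_, ?_⟩, h⟩
  · have := (cs.isReflection_simple c).conj (cs.simple c * z)⁻¹
    rwa [inv_inv] at this
  · rw [show cs.simple c * z * ((cs.simple c * z)⁻¹ * cs.simple c * (cs.simple c * z))
      = cs.simple c * (cs.simple c * z) by group, cs.simple_mul_simple_cancel_left]

/-- Chain order implies subword of *every* reduced word. -/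
lemma cle_subword {v w : W} (h : Cle cs v w) :
    ∀ ω, cs.IsReduced ω → cs.wordProd ω = w →
      ∃ α, α.Sublist ω ∧ cs.IsReduced α ∧ cs.wordProd α = v := by
  induction h with
  | refl => exact fun ω hred hω => ⟨ω, List.Sublist.refl ω, hred, hω⟩
  | tail _ hedge ih =>
      rename_i y w' _
      intro ω hred hω
      obtain ⟨⟨t, hrefl, hb⟩, hlen⟩ := hedge
      have hy : y = cs.wordProd ω * t := by
        rw [hω, hb, mul_assoc, hrefl.mul_self, mul_one]
      have hinv : cs.IsRightInversion (cs.wordProd ω) t := by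
        refine ⟨hrefl, ?_⟩
        rw [← hy, hω]
        exact hlen
      have hmem := mem_ris_of_isRightInversion cs hred hinv
      obtain ⟨j, hj, hjeq⟩ := List.mem_iff_getElem.mp hmem
      have herase : cs.wordProd (ω.eraseIdx j) = y := by
        rw [← cs.wordProd_mul_getD_rightInvSeq ω j, List.getD_eq_getElem _ _ hj, hjeq, ← hy]
      obtain ⟨β, hβsub, hβred, hβprod⟩ := exists_reduced_sublist cs (ω.eraseIdx j)
      rw [herase] at hβprod
      obtain ⟨α, hαsub, hαred, hαprod⟩ := ih β hβred hβprod
      exact ⟨α, (hαsub.trans hβsub).trans (ω.eraseIdx_sublist j), hαred, hαprod⟩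

lemma master (n : ℕ) :
    (∀ ω α : List B, cs.IsReduced ω → α.Sublist ω → cs.IsReduced α →
      cs.length (cs.wordProd ω) ≤ n → Cle cs (cs.wordProd α) (cs.wordProd ω))
    ∧ (∀ z v : W, ∀ c : B, cs.length z ≤ n → Cle cs v z →
        cs.length v < cs.length (cs.simple c * v) →
        (cs.length (cs.simple c * z) < cs.length z → Cle cs (cs.simple c * v) z)
        ∧ (cs.length z < cs.length (cs.simple c * z) →
            Cle cs (cs.simple c * v) (cs.simple c * z))) := by
  induction n using Nat.strong_induction_on with
  | _ n ih =>
  constructor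
  · -- subword implies chain
    intro ω α hredω hsub hredα hlen
    cases ω with
    | nil =>
        rw [List.sublist_nil.mp hsub]
        exact Relation.ReflTransGen.refl
    | cons c τ =>
        have hredτ : cs.IsReduced τ := by
          have := hredω.drop (j := 1)
          simpa using this
        have hπω : cs.wordProd (c :: τ) = cs.simple c * cs.wordProd τ := cs.wordProd_cons c τ
        have hlω : cs.length (cs.wordProd (c :: τ)) = cs.length (cs.wordProd τ) + 1 := by
          have h1 : cs.length (cs.wordProd (c :: τ)) = (c :: τ).length := hredω
          have h2 : cs.length (cs.wordProd τ) = τ.length := hredτ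
          rw [h1, h2, List.length_cons]
        have hnpos : 1 ≤ n := by
          have h1 : cs.length (cs.wordProd (c :: τ)) = (c :: τ).length := hredω
          omega
        have hasc : cs.length (cs.wordProd τ) < cs.length (cs.simple c * cs.wordProd τ) := by
          rw [← hπω]; omega
        have hlenτ : cs.length (cs.wordProd τ) ≤ n - 1 := by omega
        cases hsub with
        | cons _ h =>
            have hcle := (ih (n - 1) (by omega)).1 τ α hredτ h hredα hlenτ
            refine hcle.tail ?_
            rw [hπω]
            exact edge_simple_left cs hasc
        | cons_cons _ h =>
            rename_i α'
            have hredα' : cs.IsReduced α' := by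
              have := hredα.drop (j := 1)
              simpa using this
            have hcle := (ih (n - 1) (by omega)).1 τ α' hredτ h hredα' hlenτ
            have hascv : cs.length (cs.wordProd α') <
                cs.length (cs.simple c * cs.wordProd α') := by
              have h1 : cs.length (cs.wordProd (c :: α')) = (c :: α').length := hredα
              have h2 : cs.length (cs.wordProd α') = α'.length := hredα'
              rw [← cs.wordProd_cons]
              rw [h1, h2, List.length_cons]
              omega
            have := ((ih (n - 1) (by omega)).2 (cs.wordProd τ) (cs.wordProd α') c hlenτ
              hcle hascv).2 hasc
            rw [hπω, cs.wordProd_cons]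
            exact this
  · -- lifting properties
    intro z v c hlenz hcle hascv
    constructor
    · -- Z1C : descent on top
      intro hdesc
      rcases Relation.ReflTransGen.cases_tail hcle with heq | ⟨y, hvy, hedge⟩
      · subst heq
        omega
      · obtain ⟨⟨t, hrefl, hb⟩, hlt⟩ := hedge
        have hnpos : 1 ≤ n := by omega
        have hylen : cs.length y ≤ n - 1 := by omega
        rcases cs.length_simple_mul y c with hyc | hyc
        · -- ascent at y : use CL at y then the edge-lifting argument
          have hcl := ((ih (n - 1) (by omega)).2 y v c hylen hvy hascv).2 (by omega)
          -- now show Cle (s_c * y) z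
          have hzdesc : cs.length (cs.simple c * z) + 1 = cs.length z := by
            rcases cs.length_simple_mul z c with h1 | h1 <;> omega
          obtain ⟨ζ, hredζ, hζ⟩ := cs.exists_reduced_word' (cs.simple c * z)
          have hredcζ : cs.IsReduced (c :: ζ) := by
            show cs.length (cs.wordProd (c :: ζ)) = _
            rw [cs.wordProd_cons, ← hζ, cs.simple_mul_simple_cancel_left, List.length_cons]
            have : cs.length (cs.simple c * z) = ζ.length := by rw [hζ]; exact hredζ
            omega
          have hπcζ : cs.wordProd (c :: ζ) = z := by
            rw [cs.wordProd_cons, ← hζ, cs.simple_mul_simple_cancel_left]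
          have hinv : cs.IsRightInversion (cs.wordProd (c :: ζ)) t := by
            refine ⟨hrefl, ?_⟩
            rw [hπcζ]
            have : z * t = y := by rw [hb, mul_assoc, hrefl.mul_self, mul_one]
            rw [this]
            exact hlt
          have hmem := mem_ris_of_isRightInversion cs hredcζ hinv
          obtain ⟨j, hj, hjeq⟩ := List.mem_iff_getElem.mp hmem
          have herase : cs.wordProd ((c :: ζ).eraseIdx j) = y := by
            rw [← cs.wordProd_mul_getD_rightInvSeq _ j, List.getD_eq_getElem _ _ hj, hjeq,
              hπcζ, hb, mul_assoc, hrefl.mul_self, mul_one]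
          have hylift : Cle cs (cs.simple c * y) z := by
            cases j with
            | zero =>
                have h0 : cs.wordProd ζ = y := by simpa using herase
                have h1 : cs.simple c * y = z := by
                  rw [← h0, ← cs.wordProd_cons, hπcζ]
                rw [h1]
                exact Relation.ReflTransGen.refl
            | succ j' =>
                have herase' : cs.wordProd (c :: ζ.eraseIdx j') = y := by
                  simpa using herase
                have hsy : cs.wordProd (ζ.eraseIdx j') = cs.simple c * y := by
                  rw [cs.wordProd_cons] at herase'
                  rw [← herase', cs.simple_mul_simple_cancel_left]
                obtain ⟨β, hβsub, hβred, hβprod⟩ := exists_reduced_sublist cs (ζ.eraseIdx j')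
                rw [hsy] at hβprod
                have hlenζ : cs.length (cs.wordProd ζ) ≤ n - 1 := by
                  rw [← hζ]; omega
                have hchain := (ih (n - 1) (by omega)).1 ζ β hredζ
                  (hβsub.trans (ζ.eraseIdx_sublist j')) hβred hlenζ
                rw [hβprod, ← hζ] at hchain
                refine hchain.tail ?_
                exact edge_left_desc cs (by omega)
            -- end cases j
          exact Relation.ReflTransGen.trans hcl hylift
        · -- descent at y : recurse with Z1C
          have hz1c := ((ih (n - 1) (by omega)).2 y v c hylen hvy hascv).1 (by omega)
          refine hz1c.tail ?_
          exact ⟨⟨t, hrefl, hb⟩, hlt⟩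
    · -- CL : ascent on top
      intro hasc2
      rcases Relation.ReflTransGen.cases_tail hcle with heq | ⟨y, hvy, hedge⟩
      · subst heq
        exact Relation.ReflTransGen.refl
      · obtain ⟨⟨t, hrefl, hb⟩, hlt⟩ := hedge
        have hnpos : 1 ≤ n := by omega
        have hylen : cs.length y ≤ n - 1 := by omega
        rcases cs.length_simple_mul y c with hyc | hyc
        · have hcl := ((ih (n - 1) (by omega)).2 y v c hylen hvy hascv).2 (by omega)
          refine hcl.tail ?_
          refine ⟨⟨t, hrefl, ?_⟩, ?_⟩
          · rw [hb]; group
          · omega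
        · have hz1c := ((ih (n - 1) (by omega)).2 y v c hylen hvy hascv).1 (by omega)
          have h2 : Cle cs (cs.simple c * v) z := hz1c.tail ⟨⟨t, hrefl, hb⟩, hlt⟩
          refine h2.tail ?_
          exact edge_simple_left cs hasc2

end MyCox
namespace MyCox
variable {B W : Type*} [Group W] [DecidableEq W] {M : CoxeterMatrix B} (cs : CoxeterSystem M W)

lemma bruhat_refl (x : W) : BruhatLE cs x x := by
  obtain ⟨ω, hred, hω⟩ := cs.exists_reduced_word' x
  exact ⟨ω, hred, hω.symm, ω, List.Sublist.refl ω, hred, hω.symm⟩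

lemma bruhat_length_le {v w : W} (h : BruhatLE cs v w) : cs.length v ≤ cs.length w := by
  obtain ⟨ω, hred, hπ, α, hsub, hredα, hπα⟩ := h
  have h1 : cs.length v = α.length := by rw [← hπα]; exact hredα
  have h2 : cs.length w = ω.length := by rw [← hπ]; exact hred
  rw [h1, h2]
  exact hsub.length_le

lemma bruhat_eq_of_length_ge {v w : W} (h : BruhatLE cs v w)
    (hl : cs.length w ≤ cs.length v) : v = w := by
  obtain ⟨ω, hred, hπ, α, hsub, hredα, hπα⟩ := h
  have h1 : cs.length v = α.length := by rw [← hπα]; exact hredα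
  have h2 : cs.length w = ω.length := by rw [← hπ]; exact hred
  have h3 := hsub.length_le
  have : α = ω := hsub.eq_of_length (by omega)
  rw [← hπα, this, hπ]

lemma bruhat_up {v w : W} {c : B} (h : BruhatLE cs v w)
    (hw : cs.length w < cs.length (cs.simple c * w)) : BruhatLE cs v (cs.simple c * w) := by
  obtain ⟨ω, hred, hπ, α, hsub, hredα, hπα⟩ := h
  refine ⟨c :: ω, ?_, ?_, α, hsub.cons c, hredα, hπα⟩
  · show cs.length (cs.wordProd (c :: ω)) = _
    rw [cs.wordProd_cons, hπ, List.length_cons]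
    have h2 : cs.length w = ω.length := by rw [← hπ]; exact hred
    rcases cs.length_simple_mul w c with h1 | h1 <;> omega
  · rw [cs.wordProd_cons, hπ]

lemma bruhat_up_both {v w : W} {c : B} (h : BruhatLE cs v w)
    (hv : cs.length v < cs.length (cs.simple c * v))
    (hw : cs.length w < cs.length (cs.simple c * w)) :
    BruhatLE cs (cs.simple c * v) (cs.simple c * w) := by
  obtain ⟨ω, hred, hπ, α, hsub, hredα, hπα⟩ := h
  refine ⟨c :: ω, ?_, ?_, c :: α, hsub.cons₂ c, ?_, ?_⟩
  · show cs.length (cs.wordProd (c :: ω)) = _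
    rw [cs.wordProd_cons, hπ, List.length_cons]
    have h2 : cs.length w = ω.length := by rw [← hπ]; exact hred
    rcases cs.length_simple_mul w c with h1 | h1 <;> omega
  · rw [cs.wordProd_cons, hπ]
  · show cs.length (cs.wordProd (c :: α)) = _
    rw [cs.wordProd_cons, hπα, List.length_cons]
    have h2 : cs.length v = α.length := by rw [← hπα]; exact hredα
    rcases cs.length_simple_mul v c with h1 | h1 <;> omega
  · rw [cs.wordProd_cons, hπα]

lemma bruhat_lift {v w : W} {c : B} (h : BruhatLE cs v w)
    (hv : cs.length v < cs.length (cs.simple c * v))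
    (hw : cs.length (cs.simple c * w) < cs.length w) :
    BruhatLE cs (cs.simple c * v) w := by
  obtain ⟨ω, hred, hπ, α, hsub, hredα, hπα⟩ := h
  have hcle : Cle cs v w := by
    have := (master cs (cs.length w)).1 ω α hred hsub hredα (by rw [hπ])
    rwa [hπα, hπ] at this
  have h2 : Cle cs (cs.simple c * v) w :=
    ((master cs (cs.length w)).2 w v c le_rfl hcle hv).1 hw
  obtain ⟨β, hβ, hβred, hβπ⟩ := cle_subword cs h2 ω hred hπ
  exact ⟨ω, hred, hπ, β, hβ, hβred, hβπ⟩

/-- Demazure-type fold of a word acting on an element. -/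
noncomputable def dem (l : List B) (x : W) : W :=
  l.foldr (fun c y =>
    if cs.length y < cs.length (cs.simple c * y) then cs.simple c * y else y) x

lemma dem_nil (x : W) : dem cs [] x = x := rfl

lemma dem_cons (c : B) (l : List B) (x : W) :
    dem cs (c :: l) x =
      if cs.length (dem cs l x) < cs.length (cs.simple c * dem cs l x) then
        cs.simple c * dem cs l x
      else dem cs l x := rfl

lemma bruhat_dem {ω α : List B} {x : W} (hsub : α.Sublist ω) (hredα : cs.IsReduced α)
    (hadd : cs.length (cs.wordProd α * x) = cs.length (cs.wordProd α) + cs.length x) :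
    BruhatLE cs (cs.wordProd α * x) (dem cs ω x) := by
  induction ω generalizing α with
  | nil =>
      rw [List.sublist_nil.mp hsub]
      rw [cs.wordProd_nil, one_mul, dem_nil]
      exact bruhat_refl cs x
  | cons c τ ihτ =>
      rw [dem_cons]
      cases hsub with
      | cons _ h =>
          have ih := ihτ h hredα hadd
          split
          · next hcond => exact bruhat_up cs ih hcond
          · exact ih
      | cons_cons _ h =>
          rename_i α'
          have hredα' : cs.IsReduced α' := by
            have := hredα.drop (j := 1)
            simpa using this
          have hlv : cs.length (cs.wordProd (c :: α'))
              = cs.length (cs.wordProd α') + 1 := by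
            have h1 : cs.length (cs.wordProd (c :: α')) = (c :: α').length := hredα
            have h2 : cs.length (cs.wordProd α') = α'.length := hredα'
            rw [h1, h2, List.length_cons]
          have hπc : cs.wordProd (c :: α') = cs.simple c * cs.wordProd α' :=
            cs.wordProd_cons c α'
          have hassoc : cs.wordProd (c :: α') * x
              = cs.simple c * (cs.wordProd α' * x) := by rw [hπc]; group
          have haddv : cs.length (cs.wordProd α' * x)
              = cs.length (cs.wordProd α') + cs.length x := by
            have h1 : cs.length (cs.simple c * (cs.wordProd α' * x))
                = cs.length (cs.wordProd α') + 1 + cs.length x := by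
              rw [← hassoc, hadd, hlv]
            have h2 := cs.length_mul_le (cs.wordProd α') x
            rcases cs.length_simple_mul (cs.wordProd α' * x) c with h3 | h3 <;> omega
          have hascvx : cs.length (cs.wordProd α' * x)
              < cs.length (cs.simple c * (cs.wordProd α' * x)) := by
            have h1 : cs.length (cs.simple c * (cs.wordProd α' * x))
                = cs.length (cs.wordProd α') + 1 + cs.length x := by
              rw [← hassoc, hadd, hlv]
            omega
          have ih := ihτ h hredα' haddv
          split
          · next hcond =>
              rw [hassoc]
              exact bruhat_up_both cs ih hascvx hcond
          · next hcond =>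
              have hdesc : cs.length (cs.simple c * dem cs τ x) < cs.length (dem cs τ x) := by
                rcases cs.length_simple_mul (dem cs τ x) c with h1 | h1 <;> omega
              rw [hassoc]
              exact bruhat_lift cs ih hascvx hdesc

section phi

variable {Mon : Type*} [Monoid Mon] (φ : W → Mon)
  (hmul : ∀ u v : W, cs.length (u * v) = cs.length u + cs.length v → φ (u * v) = φ u * φ v)
  (hidem : ∀ i : B, φ (cs.simple i) * φ (cs.simple i) = φ (cs.simple i))

include hmul hidem in
lemma phi_simple_mul (c : B) (y : W) :
    φ (cs.simple c) * φ y =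
      φ (if cs.length y < cs.length (cs.simple c * y) then cs.simple c * y else y) := by
  rcases cs.length_simple_mul y c with h | h
  · rw [if_pos (by omega)]
    exact (hmul (cs.simple c) y (by rw [h, cs.length_simple]; ring)).symm
  · rw [if_neg (by omega)]
    have hy : y = cs.simple c * (cs.simple c * y) := by
      rw [cs.simple_mul_simple_cancel_left]
    have hϕ : φ y = φ (cs.simple c) * φ (cs.simple c * y) := by
      nth_rewrite 1 [hy]
      refine hmul _ _ ?_
      rw [← hy, cs.length_simple]
      omega
    rw [hϕ, ← mul_assoc, hidem c, ← hϕ]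

include hmul hidem in
lemma phi_reduced_dem (γ : List B) (hred : cs.IsReduced γ) (x : W) :
    φ (cs.wordProd γ) * φ x = φ (dem cs γ x) := by
  induction γ with
  | nil =>
      rw [cs.wordProd_nil, dem_nil]
      have := hmul 1 x (by simp)
      rw [one_mul] at this
      exact this.symm
  | cons c γ ih =>
      have hredγ : cs.IsReduced γ := by
        have := hred.drop (j := 1)
        simpa using this
      have hasc : cs.length (cs.simple c * cs.wordProd γ)
          = 1 + cs.length (cs.wordProd γ) := by
        have h1 : cs.length (cs.wordProd (c :: γ)) = (c :: γ).length := hred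
        have h2 : cs.length (cs.wordProd γ) = γ.length := hredγ
        rw [cs.wordProd_cons] at h1
        rw [h1, h2, List.length_cons]
        omega
      rw [cs.wordProd_cons, hmul (cs.simple c) (cs.wordProd γ)
        (by rw [hasc, cs.length_simple]), mul_assoc, ih hredγ, dem_cons]
      exact phi_simple_mul cs φ hmul hidem c (dem cs γ x)

end phi

end MyCox

theorem stmt4 {B W : Type*} [Group W] [Finite W] {M : CoxeterMatrix B}
    (cs : CoxeterSystem M W)
    (w₀ : W) (hw₀ : ∀ w : W, cs.length w ≤ cs.length w₀)
    {Mon : Type*} [Monoid Mon] (φ : W → Mon)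
    (hmul : ∀ u v : W, cs.length (u * v) = cs.length u + cs.length v →
      φ (u * v) = φ u * φ v)
    (hidem : ∀ i : B, φ (cs.simple i) * φ (cs.simple i) = φ (cs.simple i)) :
    ∀ w w' : W, BruhatLE cs w w' → φ w' * φ (w⁻¹ * w₀) = φ w₀ := by
  letI := Classical.decEq W
  intro w w' hww
  obtain ⟨ω, hred, hπ, α, hsub, hredα, hπα⟩ := hww
  have hwx : w * (w⁻¹ * w₀) = w₀ := by group
  have hF := MyCox.length_add_length_inv_mul_longest cs w₀ hw₀ w
  have hadd : cs.length (cs.wordProd α * (w⁻¹ * w₀))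
      = cs.length (cs.wordProd α) + cs.length (w⁻¹ * w₀) := by
    rw [hπα, hwx, ← hF]
  have hdem := MyCox.bruhat_dem cs hsub hredα hadd
  rw [hπα, hwx] at hdem
  have h1 : cs.length (MyCox.dem cs ω (w⁻¹ * w₀)) ≤ cs.length w₀ := hw₀ _
  have heq : w₀ = MyCox.dem cs ω (w⁻¹ * w₀) :=
    MyCox.bruhat_eq_of_length_ge cs hdem h1
  have h2 := MyCox.phi_reduced_dem cs φ hmul hidem ω hred (w⁻¹ * w₀)
  rw [hπ, ← heq] at h2
  exact h2
end

section
/- Let M be a monoid and φ : W → M a map such that φ(u·v) = φ(u)·φ(v) whenever ℓ(u·v) = ℓ(u) + ℓ(v), and φ(s)·φ(s) = φ(s) for every s ∈ S. Then for all w', v ∈ W and any reduced word w' = s₁s₂⋯s_k (with sᵢ ∈ S), one has φ(w')·φ(v) = φ((π_{s₁} ∘ π_{s₂} ∘ ⋯ ∘ π_{s_k})(v)). In particular, for each pair (w', v) there exists an element w̄ ∈ W, independent of (M, φ), with φ(w')·φ(v) = φ(w̄). -/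
theorem stmt6 {B W : Type*} [Group W] [Finite W] {M : CoxeterMatrix B}
    (cs : CoxeterSystem M W)
    {Mon : Type*} [Monoid Mon] (φ : W → Mon)
    (hmul : ∀ u v : W, cs.length (u * v) = cs.length u + cs.length v →
      φ (u * v) = φ u * φ v)
    (hidem : ∀ i : B, φ (cs.simple i) * φ (cs.simple i) = φ (cs.simple i)) :
    ∀ w' v : W, ∀ ω : List B, cs.IsReduced ω → cs.wordProd ω = w' →
      φ w' * φ v = φ (ω.foldr (piOp cs) v) := by
  have key : ∀ (i : B) (v : W), φ (cs.simple i) * φ v = φ (piOp cs i v) := by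
    intro i v
    unfold piOp
    by_cases h : cs.length (cs.simple i * v) = cs.length v + 1
    · rw [if_pos h, hmul (cs.simple i) v (by rw [h, cs.length_simple, add_comm])]
    · rw [if_neg h]
      have h' : cs.length (cs.simple i * v) + 1 = cs.length v :=
        (cs.length_simple_mul v i).resolve_left h
      have : φ v = φ (cs.simple i) * φ (cs.simple i * v) := by
        have := hmul (cs.simple i) (cs.simple i * v)
          (by rw [cs.simple_mul_simple_cancel_left, cs.length_simple, add_comm, h'])
        rwa [cs.simple_mul_simple_cancel_left] at this
      rw [this, ← mul_assoc, hidem]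
  intro w' v ω
  induction ω generalizing w' v with
  | nil =>
    rintro _ rfl
    simp only [List.foldr_nil, cs.wordProd_nil]
    exact (hmul 1 v (by simp)).symm.trans (by rw [one_mul])
  | cons i ω' ih =>
    rintro hred rfl
    rw [cs.wordProd_cons]
    have hred' : cs.IsReduced ω' := by
      have := hred.drop 1
      simpa using this
    have hlen : cs.length (cs.simple i * cs.wordProd ω') =
        cs.length (cs.simple i) + cs.length (cs.wordProd ω') := by
      have h1 : cs.length (cs.simple i * cs.wordProd ω') = (i :: ω').length := by
        have := hred; rw [CoxeterSystem.IsReduced, cs.wordProd_cons] at this; exact this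
      rw [h1, cs.length_simple, List.length_cons, hred', add_comm]
    rw [hmul _ _ hlen, mul_assoc, ih _ v hred' rfl, List.foldr_cons, key]
end

section
/- Let I ⊆ Δ, let r ∈ ℚ[Λ] be invariant under W_I, let v ∈ W and w' ∈ W_I with ℓ(v·w') = ℓ(v) + ℓ(w'). Then for any reduced words for v and for w', one has L_v(L_{w'}(r · e^{−ρ})) = L_v(r · e^{−ρ}). -/
/- Context: a reduced crystallographic root system `Φ` spanning a finite-dimensional
`ℚ`-vector space `V`, with Weyl group `W` (a Coxeter system whose simple reflections
are indexed by the base `Δ` of simple roots), positive roots `Φ⁺`, weight lattice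
`Λ = {λ ∈ V : ⟨λ, α^∨⟩ ∈ ℤ for all α ∈ Φ}`, and `ρ = (1/2)·Σ_{α ∈ Φ⁺} α`.
`ℚ[Λ]` is the group algebra of `Λ` over `ℚ` with basis `e^λ`, on which `W` acts by ring
automorphisms via `w · e^λ = e^{w(λ)}`.  For a simple root `α`, the Demazure operator
`L_{s_α}` is the unique `ℚ`-linear map with `(1 - e^α) · L_{s_α}(f) = f - s_α · f`, and for
a reduced word `w = s_{α₁} ⋯ s_{α_k}` we set `L_w = L_{s_{α₁}} ∘ ⋯ ∘ L_{s_{α_k}}`. -/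

/-- All the data of the context: the root system, the simple/positive roots, `ρ`, the
weight lattice `Λ`, and the Weyl group `W` with its Coxeter structure and its action
on `V` (where the simple reflection indexed by `b : B` acts as the reflection attached to
the simple root `idx b`). -/
structure RootCtx (V : Type) [AddCommGroup V] [Module ℚ V]
    (B : Type) (W : Type) [Group W] (M : CoxeterMatrix B) where
  finV : FiniteDimensional ℚ V
  /-- the finite set of roots -/
  Φ : Finset V
  span_eq_top : Submodule.span ℚ (Φ : Set V) = ⊤
  /-- `coroot α` is the linear functional `⟨·, α^∨⟩` -/
  coroot : V → V →ₗ[ℚ] ℚ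
  coroot_self : ∀ α ∈ Φ, coroot α α = 2
  crystallographic : ∀ α ∈ Φ, ∀ β ∈ Φ, ∃ n : ℤ, (n : ℚ) = coroot α β
  /-- the root system is reduced -/
  reduced : ∀ α ∈ Φ, ∀ c : ℚ, c • α ∈ Φ → c = 1 ∨ c = -1
  reflect_root_mem : ∀ α ∈ Φ, ∀ β ∈ Φ, β - coroot α β • α ∈ Φ
  /-- the base of simple roots -/
  Δ : Finset V
  Δ_sub : Δ ⊆ Φ
  Δ_indep : LinearIndependent ℚ (fun β : {x // x ∈ Δ} => (β : V))
  /-- the set of positive roots -/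
  Φpos : Finset V
  Φpos_sub : Φpos ⊆ Φ
  mem_Φpos : ∀ α ∈ Φ, (α ∈ Φpos ↔
    ∃ c : V → ℚ, (∀ β ∈ Δ, 0 ≤ c β) ∧ α = ∑ β ∈ Δ, c β • β)
  pos_or_neg : ∀ α ∈ Φ, α ∈ Φpos ∨ -α ∈ Φpos
  /-- the half-sum of the positive roots -/
  ρ : V
  ρ_def : (2 : ℚ) • ρ = ∑ α ∈ Φpos, α
  /-- the weight lattice -/
  Λ : AddSubgroup V
  mem_Λ : ∀ x : V, x ∈ Λ ↔ ∀ α ∈ Φ, ∃ n : ℤ, (n : ℚ) = coroot α x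
  ρ_mem : ρ ∈ Λ
  root_mem : ∀ α ∈ Φ, α ∈ Λ
  /-- the Weyl group `W` as a Coxeter system, whose simple reflections are the reflections
  in the simple roots -/
  cs : CoxeterSystem M W
  /-- the indexing of the simple roots by `B` -/
  idx : B ≃ {α // α ∈ Δ}
  /-- the (faithful) action of the Weyl group on `V` -/
  act : W →* (V ≃ₗ[ℚ] V)
  act_faithful : Function.Injective act
  act_simple : ∀ (b : B) (x : V),
    act (cs.simple b) x = x - coroot (idx b : V) x • (idx b : V)
  act_mem : ∀ (w : W), ∀ x ∈ Λ, act w x ∈ Λ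

namespace RootCtx

variable {V B W : Type} [AddCommGroup V] [Module ℚ V] [Group W] {M : CoxeterMatrix B}
variable (ctx : RootCtx V B W M)

/-- The group algebra `ℚ[Λ]`. -/
abbrev QΛ : Type := AddMonoidAlgebra ℚ ↥ctx.Λ

/-- The basis element `e^λ` of `ℚ[Λ]`. -/
noncomputable def e (lam : ↥ctx.Λ) : ctx.QΛ := AddMonoidAlgebra.of' ℚ ↥ctx.Λ lam

/-- `ρ` as an element of the weight lattice. -/
def ρΛ : ↥ctx.Λ := ⟨ctx.ρ, ctx.ρ_mem⟩

/-- The simple root indexed by `b`, as an element of the weight lattice. -/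
def simpleRoot (b : B) : ↥ctx.Λ :=
  ⟨(ctx.idx b : V), ctx.root_mem _ (ctx.Δ_sub (ctx.idx b).2)⟩

/-- The action of `w ∈ W` on the weight lattice `Λ`. -/
noncomputable def actΛ (w : W) : ↥ctx.Λ ≃+ ↥ctx.Λ where
  toFun x := ⟨ctx.act w x, ctx.act_mem w x x.2⟩
  invFun x := ⟨ctx.act w⁻¹ x, ctx.act_mem w⁻¹ x x.2⟩
  left_inv x := by
    ext
    show (ctx.act w⁻¹ * ctx.act w) (x : V) = (x : V)
    rw [← map_mul, inv_mul_cancel, map_one]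
    rfl
  right_inv x := by
    ext
    show (ctx.act w * ctx.act w⁻¹) (x : V) = (x : V)
    rw [← map_mul, mul_inv_cancel, map_one]
    rfl
  map_add' x y := by
    ext
    show ctx.act w (↑x + ↑y) = ctx.act w x + ctx.act w y
    exact map_add _ _ _

/-- The action of `w ∈ W` on `ℚ[Λ]` by `ℚ`-algebra (in particular ring) automorphisms,
with `w · e^λ = e^{w(λ)}`. -/
noncomputable def wact (w : W) : ctx.QΛ ≃ₐ[ℚ] ctx.QΛ :=
  AddMonoidAlgebra.domCongr ℚ ℚ (ctx.actΛ w)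

/-- The augmentation `ε : ℚ[Λ] → ℚ`, the `ℚ`-algebra homomorphism with `ε(e^λ) = 1`. -/
noncomputable def eps : ctx.QΛ →ₐ[ℚ] ℚ := AddMonoidAlgebra.lift ℚ ℚ ↥ctx.Λ 1

/-- `L` is *the* Demazure operator `L_{s_α}` attached to the simple root `α = idx b`:
the unique `ℚ`-linear endomorphism of `ℚ[Λ]` satisfying
`(1 - e^α) * L f = f - s_α · f` for all `f`. -/
def IsDemazure (b : B) (L : ctx.QΛ →ₗ[ℚ] ctx.QΛ) : Prop :=
  ∀ f : ctx.QΛ, (1 - ctx.e (ctx.simpleRoot b)) * L f = f - ctx.wact (ctx.cs.simple b) f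

/-- Given a family `L` of Demazure operators indexed by the simple roots,
`Lword L [α₁, …, α_k] = L_{s_{α₁}} ∘ ⋯ ∘ L_{s_{α_k}}`; applied to reduced words it yields the
operators `L_w`. -/
noncomputable def Lword (L : B → ctx.QΛ →ₗ[ℚ] ctx.QΛ) (ω : List B) :
    ctx.QΛ →ₗ[ℚ] ctx.QΛ :=
  ω.foldr (fun b g => (L b).comp g) LinearMap.id

/-- The Bruhat order on `W`: `v ≤ w` iff some (equivalently, every) reduced word for `w`
contains a subword which is a reduced word for `v`. -/
def BruhatLE (v w : W) : Prop :=
  ∃ ω : List B, ctx.cs.IsReduced ω ∧ ctx.cs.wordProd ω = w ∧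
    ∃ ω' : List B, ω'.Sublist ω ∧ ctx.cs.IsReduced ω' ∧ ctx.cs.wordProd ω' = v

end RootCtx

/-- The standard parabolic subgroup `W_I` generated by the simple reflections indexed by `I`. -/
def RootCtx.parabolic {V B W : Type} [AddCommGroup V] [Module ℚ V] [Group W]
    {M : CoxeterMatrix B} (ctx : RootCtx V B W M) (I : Finset B) : Subgroup W :=
  Subgroup.closure {u : W | ∃ b ∈ I, u = ctx.cs.simple b}
section Aux

namespace RootCtx

variable {V B W : Type} [AddCommGroup V] [Module ℚ V] [Group W] {M : CoxeterMatrix B}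
variable (ctx : RootCtx V B W M)

lemma zero_not_mem_Φ : (0 : V) ∉ ctx.Φ := by
  intro h
  have := ctx.coroot_self 0 h
  simp at this

lemma span_Δ : Submodule.span ℚ (ctx.Δ : Set V) = ⊤ := by
  rw [← top_le_iff, ← ctx.span_eq_top, Submodule.span_le]
  intro α hα
  rcases ctx.pos_or_neg α hα with h | h
  · obtain ⟨c, _, hc2⟩ := (ctx.mem_Φpos α hα).mp h
    rw [hc2]
    exact Submodule.sum_mem _ fun β hβ =>
      Submodule.smul_mem _ _ (Submodule.subset_span hβ)
  · have hmem : -α ∈ ctx.Φ := ctx.Φpos_sub h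
    obtain ⟨c, _, hc2⟩ := (ctx.mem_Φpos _ hmem).mp h
    have : -α ∈ Submodule.span ℚ (ctx.Δ : Set V) := by
      rw [hc2]
      exact Submodule.sum_mem _ fun β hβ =>
        Submodule.smul_mem _ _ (Submodule.subset_span hβ)
    simpa using Submodule.neg_mem _ this

/-- The simple roots as a basis of `V`. -/
noncomputable def bV : Module.Basis {x // x ∈ ctx.Δ} ℚ V :=
  Module.Basis.mk ctx.Δ_indep (by
    rw [← ctx.span_Δ]
    apply Submodule.span_le.mpr
    intro x hx
    exact Submodule.subset_span (Set.mem_range.mpr ⟨⟨x, hx⟩, rfl⟩))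

@[simp] lemma bV_apply (γ : {x // x ∈ ctx.Δ}) : ctx.bV γ = (γ : V) := by
  simp [bV]

lemma repr_nonneg_of_pos {β : V} (hβ : β ∈ ctx.Φpos) (γ : {x // x ∈ ctx.Δ}) :
    0 ≤ ctx.bV.repr β γ := by
  obtain ⟨c, hc1, hc2⟩ := (ctx.mem_Φpos β (ctx.Φpos_sub hβ)).mp hβ
  have hβ' : β = ∑ δ : {x // x ∈ ctx.Δ}, c δ • ctx.bV δ := by
    rw [hc2, Finset.univ_eq_attach, ← Finset.sum_attach ctx.Δ (fun δ => c δ • δ)]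
    simp
  rw [hβ', ctx.bV.repr_sum_self]
  exact hc1 _ γ.2

end RootCtx

end Aux
section Aux2

namespace RootCtx

variable {V B W : Type} [AddCommGroup V] [Module ℚ V] [Group W] {M : CoxeterMatrix B}
variable (ctx : RootCtx V B W M)

lemma mem_pos_of_repr_nonneg {β : V} (hβ : β ∈ ctx.Φ)
    (h : ∀ γ, 0 ≤ ctx.bV.repr β γ) : β ∈ ctx.Φpos := by
  rcases ctx.pos_or_neg β hβ with h' | h'
  · exact h'
  · exfalso
    have h3 : ∀ γ, ctx.bV.repr β γ = 0 := by
      intro γ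
      have hneg := ctx.repr_nonneg_of_pos h' γ
      have he : (ctx.bV.repr (-β)) γ = -(ctx.bV.repr β γ) := by simp
      rw [he] at hneg
      have hpos := h γ
      linarith
    have hb0 : β = 0 := by
      apply ctx.bV.repr.injective
      ext γ
      simp [h3 γ]
    exact ctx.zero_not_mem_Φ (hb0 ▸ hβ)

lemma neg_not_pos {β : V} (hβ : β ∈ ctx.Φpos) : -β ∉ ctx.Φpos := by
  intro h
  have h1 := ctx.repr_nonneg_of_pos hβ
  have h2 := ctx.repr_nonneg_of_pos h
  have h3 : ∀ γ, ctx.bV.repr β γ = 0 := by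
    intro γ
    have he : (ctx.bV.repr (-β)) γ = -(ctx.bV.repr β γ) := by simp
    have := h2 γ
    rw [he] at this
    have := h1 γ
    linarith
  have hb0 : β = 0 := by
    apply ctx.bV.repr.injective
    ext γ
    simp [h3 γ]
  exact ctx.zero_not_mem_Φ (hb0 ▸ ctx.Φpos_sub hβ)

lemma simple_root_mem_Φ (b : B) : (ctx.idx b : V) ∈ ctx.Φ := ctx.Δ_sub (ctx.idx b).2

lemma simple_root_ne_zero (b : B) : (ctx.idx b : V) ≠ 0 := by
  intro h
  exact ctx.zero_not_mem_Φ (h ▸ ctx.simple_root_mem_Φ b)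

lemma simple_root_pos (b : B) : (ctx.idx b : V) ∈ ctx.Φpos := by
  apply ctx.mem_pos_of_repr_nonneg (ctx.simple_root_mem_Φ b)
  intro γ
  have : (ctx.idx b : V) = ctx.bV (ctx.idx b) := by simp
  rw [this, ctx.bV.repr_self]
  rcases eq_or_ne γ (ctx.idx b) with h | h
  · simp [h]
  · simp [Finsupp.single_eq_of_ne h]

lemma act_act_inv (w : W) (x : V) : ctx.act w (ctx.act w⁻¹ x) = x := by
  have : (ctx.act w) * (ctx.act w⁻¹) = 1 := by rw [← map_mul, mul_inv_cancel, map_one]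
  calc ctx.act w (ctx.act w⁻¹ x) = ((ctx.act w) * (ctx.act w⁻¹)) x := rfl
    _ = x := by rw [this]; rfl

lemma act_inv_act (w : W) (x : V) : ctx.act w⁻¹ (ctx.act w x) = x := by
  have : (ctx.act w⁻¹) * (ctx.act w) = 1 := by rw [← map_mul, inv_mul_cancel, map_one]
  calc ctx.act w⁻¹ (ctx.act w x) = ((ctx.act w⁻¹) * (ctx.act w)) x := rfl
    _ = x := by rw [this]; rfl

lemma act_mul_apply (w₁ w₂ : W) (x : V) :
    ctx.act (w₁ * w₂) x = ctx.act w₁ (ctx.act w₂ x) := by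
  rw [map_mul]; rfl

lemma act_root_mem (w : W) : ∀ β ∈ ctx.Φ, ctx.act w β ∈ ctx.Φ := by
  induction w using ctx.cs.simple_induction with
  | simple i =>
    intro β hβ
    rw [ctx.act_simple i β]
    exact ctx.reflect_root_mem _ (ctx.simple_root_mem_Φ i) _ hβ
  | one => intro β hβ; rw [map_one]; exact hβ
  | mul w₁ w₂ h₁ h₂ => intro β hβ; rw [ctx.act_mul_apply]; exact h₁ _ (h₂ _ hβ)

lemma act_simple_self (b : B) :
    ctx.act (ctx.cs.simple b) (ctx.idx b : V) = -(ctx.idx b : V) := by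
  rw [ctx.act_simple b, ctx.coroot_self _ (ctx.simple_root_mem_Φ b)]
  module

lemma act_simple_sq (b : B) (x : V) :
    ctx.act (ctx.cs.simple b) (ctx.act (ctx.cs.simple b) x) = x := by
  rw [← ctx.act_mul_apply, ctx.cs.simple_mul_simple_self, map_one]
  rfl

/-- the key geometric fact: `s_c` permutes the positive roots other than `α_c`. -/
lemma simple_reflect_pos (c : B) {β : V} (hβ : β ∈ ctx.Φpos) (hne : β ≠ (ctx.idx c : V)) :
    ctx.act (ctx.cs.simple c) β ∈ ctx.Φpos ∧ ctx.act (ctx.cs.simple c) β ≠ (ctx.idx c : V) := by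
  set α : V := (ctx.idx c : V) with hα
  have hβΦ : β ∈ ctx.Φ := ctx.Φpos_sub hβ
  have hmem : ctx.act (ctx.cs.simple c) β ∈ ctx.Φ := ctx.act_root_mem _ _ hβΦ
  have hformula : ctx.act (ctx.cs.simple c) β = β - ctx.coroot α β • α := ctx.act_simple c β
  constructor
  · by_contra hcon
    rcases ctx.pos_or_neg _ hmem with h | h
    · exact hcon h
    have hreprneg : ∀ γ, ctx.bV.repr (ctx.act (ctx.cs.simple c) β) γ ≤ 0 := by
      intro γ
      have h0 := ctx.repr_nonneg_of_pos h γ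
      have he : (ctx.bV.repr (-(ctx.act (ctx.cs.simple c) β))) γ
          = -(ctx.bV.repr (ctx.act (ctx.cs.simple c) β) γ) := by simp
      rw [he] at h0
      linarith
    have hzero : ∀ γ, γ ≠ ctx.idx c → ctx.bV.repr β γ = 0 := by
      intro γ hγ
      have hac : α = ctx.bV (ctx.idx c) := by simp [hα]
      have h1 : ctx.bV.repr (ctx.act (ctx.cs.simple c) β) γ = ctx.bV.repr β γ := by
        rw [hformula, map_sub, map_smul, hac, ctx.bV.repr_self]
        simp [Finsupp.single_eq_of_ne hγ]
      have h2 := hreprneg γ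
      rw [h1] at h2
      have h3 := ctx.repr_nonneg_of_pos hβ γ
      linarith
    have hβeq : β = (ctx.bV.repr β (ctx.idx c)) • α := by
      apply ctx.bV.repr.injective
      ext γ
      rw [map_smul]
      have hac : α = ctx.bV (ctx.idx c) := by simp [hα]
      rw [hac, ctx.bV.repr_self]
      rcases eq_or_ne γ (ctx.idx c) with h' | h'
      · subst h'; simp
      · rw [hzero γ h']; simp [Finsupp.single_eq_of_ne h']
    have hred := ctx.reduced α (ctx.simple_root_mem_Φ c) (ctx.bV.repr β (ctx.idx c))
      (by rw [← hβeq]; exact hβΦ)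
    have hnn := ctx.repr_nonneg_of_pos hβ (ctx.idx c)
    rcases hred with h1 | h1
    · rw [h1, one_smul] at hβeq
      exact hne hβeq
    · rw [h1] at hnn; norm_num at hnn
  · intro h
    have h2 : ctx.act (ctx.cs.simple c) (ctx.act (ctx.cs.simple c) β)
        = ctx.act (ctx.cs.simple c) α := congrArg _ h
    rw [ctx.act_simple_sq, ctx.act_simple_self] at h2
    rw [h2] at hβ
    exact ctx.neg_not_pos (ctx.simple_root_pos c) hβ

end RootCtx

end Aux2
section Aux3

namespace RootCtx

variable {V B W : Type} [AddCommGroup V] [Module ℚ V] [Group W] {M : CoxeterMatrix B}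
variable (ctx : RootCtx V B W M)

lemma ρ_reflect (b : B) :
    ctx.act (ctx.cs.simple b) ctx.ρ = ctx.ρ - (ctx.idx b : V) := by
  classical
  set α : V := (ctx.idx b : V) with hα
  set m : V → V := fun x => ctx.act (ctx.cs.simple b) x with hm
  have hminj : Function.Injective m := (ctx.act (ctx.cs.simple b)).injective
  set S : Finset V := ctx.Φpos.erase α with hS
  have hmap : ∀ β ∈ S, m β ∈ S := by
    intro β hβ
    obtain ⟨hne, hpos⟩ := Finset.mem_erase.mp hβ
    obtain ⟨h1, h2⟩ := ctx.simple_reflect_pos b hpos hne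
    exact Finset.mem_erase.mpr ⟨h2, h1⟩
  have himg : S.image m = S := by
    apply Finset.eq_of_subset_of_card_le
    · intro x hx
      obtain ⟨β, hβ, rfl⟩ := Finset.mem_image.mp hx
      exact hmap β hβ
    · rw [Finset.card_image_of_injective _ hminj]
  have hsum : ∑ β ∈ S, m β = ∑ β ∈ S, β := by
    have h0 := Finset.sum_image (f := fun x => x) (s := S) (g := m)
      (fun x _ y _ h => hminj h)
    rw [himg] at h0
    exact h0.symm
  have hαpos : α ∈ ctx.Φpos := ctx.simple_root_pos b
  have hsplit : ∑ β ∈ ctx.Φpos, m β = (∑ β ∈ S, m β) + m α := by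
    rw [hS, Finset.sum_erase_add _ _ hαpos]
  have hsplit2 : ∑ β ∈ ctx.Φpos, β = (∑ β ∈ S, β) + α := by
    rw [hS, Finset.sum_erase_add _ _ hαpos]
  have hmα : m α = -α := ctx.act_simple_self b
  have h2ρ : ctx.act (ctx.cs.simple b) ((2:ℚ) • ctx.ρ) = (2:ℚ) • ctx.ρ - (2:ℚ) • α := by
    rw [ctx.ρ_def, map_sum]
    calc (∑ β ∈ ctx.Φpos, m β) = (∑ β ∈ S, m β) + m α := hsplit
      _ = (∑ β ∈ S, β) + -α := by rw [hsum, hmα]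
      _ = ((∑ β ∈ ctx.Φpos, β) - α) + -α := by rw [hsplit2]; abel
      _ = (∑ β ∈ ctx.Φpos, β) - (2:ℚ) • α := by
          rw [two_smul]; abel
  rw [map_smul] at h2ρ
  have h3 : (2:ℚ) • ctx.act (ctx.cs.simple b) ctx.ρ = (2:ℚ) • (ctx.ρ - α) := by
    rw [h2ρ, smul_sub]
  exact smul_right_injective V (by norm_num) h3

/-- a reflection is determined by its root: if `u(α_b) = α_c` then `u s_b u⁻¹ = s_c`. -/
lemma conj_simple_of_act_eq {u : W} {b c : B}
    (h : ctx.act u (ctx.idx b : V) = (ctx.idx c : V)) :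
    u * ctx.cs.simple b * u⁻¹ = ctx.cs.simple c := by
  set αb : V := (ctx.idx b : V)
  set αc : V := (ctx.idx c : V)
  set t : W := u * ctx.cs.simple b * u⁻¹ * ctx.cs.simple c with ht
  -- T x = x + h(x) • αc for a scalar depending on x
  have hTform : ∀ x : V, ∃ k : ℚ, ctx.act t x = x + k • αc := by
    intro x
    have e1 : ctx.act t x = ctx.act u (ctx.act (ctx.cs.simple b)
        (ctx.act u⁻¹ (ctx.act (ctx.cs.simple c) x))) := by
      rw [ht, ctx.act_mul_apply, ctx.act_mul_apply, ctx.act_mul_apply]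
    set y := ctx.act u⁻¹ (ctx.act (ctx.cs.simple c) x) with hy
    have e2 : ctx.act (ctx.cs.simple b) y = y - ctx.coroot αb y • αb := ctx.act_simple b y
    refine ⟨-(ctx.coroot αc x) - ctx.coroot αb y, ?_⟩
    rw [e1, e2, map_sub, map_smul, ctx.act_act_inv, h, ctx.act_simple c x]
    module
  have hTαc : ctx.act t αc = αc := by
    have e1 : ctx.act t αc = ctx.act u (ctx.act (ctx.cs.simple b)
        (ctx.act u⁻¹ (ctx.act (ctx.cs.simple c) αc))) := by
      rw [ht, ctx.act_mul_apply, ctx.act_mul_apply, ctx.act_mul_apply]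
    have e2 : ctx.act (ctx.cs.simple c) αc = -αc := ctx.act_simple_self c
    have e3 : ctx.act u⁻¹ αc = αb := by rw [← h, ctx.act_inv_act]
    rw [e1, e2, map_neg, e3, map_neg, ctx.act_simple_self b, neg_neg, h]
  -- iterates
  have hiter : ∀ (β : V) (k : ℚ), ctx.act t β = β + k • αc →
      ∀ n : ℕ, (fun x => ctx.act t x)^[n] β = β + ((n : ℚ) * k) • αc := by
    intro β k hβ n
    induction n with
    | zero => simp
    | succ n ih =>
      rw [Function.iterate_succ_apply', ih, map_add, map_smul, hβ, hTαc]
      push_cast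
      module
  have hiter_mem : ∀ β ∈ ctx.Φ, ∀ n : ℕ, (fun x => ctx.act t x)^[n] β ∈ ctx.Φ := by
    intro β hβ n
    induction n with
    | zero => simpa
    | succ n ih =>
      rw [Function.iterate_succ_apply']
      exact ctx.act_root_mem t _ ih
  -- each root is fixed
  have hfix : ∀ β ∈ ctx.Φ, ctx.act t β = β := by
    intro β hβ
    obtain ⟨k, hk⟩ := hTform β
    rcases eq_or_ne k 0 with h0 | h0
    · rw [hk, h0]; simp
    exfalso
    have hinj : Function.Injective (fun n : ℕ => β + ((n : ℚ) * k) • αc) := by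
      intro n₁ n₂ hn
      simp only [add_right_inj] at hn
      have := sub_eq_zero.mpr hn
      rw [← sub_smul] at this
      rcases smul_eq_zero.mp this with h' | h'
      · have : (n₁ : ℚ) * k = (n₂ : ℚ) * k := by linarith [sub_eq_zero.mp h']
        have := mul_right_cancel₀ h0 this
        exact_mod_cast this
      · exact absurd h' (ctx.simple_root_ne_zero c)
    have hmem : ∀ n : ℕ, β + ((n : ℚ) * k) • αc ∈ (ctx.Φ : Set V) := by
      intro n
      rw [← hiter β k hk n]
      exact hiter_mem β hβ n
    exact (Set.infinite_of_injective_forall_mem hinj hmem) ctx.Φ.finite_toSet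
  -- conclude t = 1
  have hmaps : ((ctx.act t : V ≃ₗ[ℚ] V) : V →ₗ[ℚ] V) = LinearMap.id :=
    LinearMap.ext_on ctx.span_eq_top (fun x hx => hfix x hx)
  have ht1 : t = 1 := by
    apply ctx.act_faithful
    rw [map_one]
    ext x
    exact DFunLike.congr_fun hmaps x
  have h2 := mul_eq_one_iff_eq_inv.mp ht1
  rwa [ctx.cs.inv_simple] at h2

end RootCtx

end Aux3
section Aux4

namespace RootCtx

variable {V B W : Type} [AddCommGroup V] [Module ℚ V] [Group W] {M : CoxeterMatrix B}
variable (ctx : RootCtx V B W M)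

lemma pos_of_length_lt : ∀ (n : ℕ) (u : W) (b : B), ctx.cs.length u = n →
    ctx.cs.length u < ctx.cs.length (u * ctx.cs.simple b) →
    ctx.act u (ctx.idx b : V) ∈ ctx.Φpos := by
  intro n
  induction n using Nat.strong_induction_on with
  | _ n ih =>
    intro u b hn hlt
    rcases eq_or_ne u 1 with rfl | hu
    · rw [map_one]
      exact ctx.simple_root_pos b
    · obtain ⟨c, hc⟩ := ctx.cs.exists_leftDescent_of_ne_one hu
      set u' := ctx.cs.simple c * u with hu'
      have huu' : u = ctx.cs.simple c * u' := by
        rw [hu', ctx.cs.simple_mul_simple_cancel_left]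
      have hlu' : ctx.cs.length u' + 1 = ctx.cs.length u := by
        rcases ctx.cs.length_simple_mul u c with h | h
        · exact absurd hc (by rw [CoxeterSystem.IsLeftDescent, ← hu', h]; omega)
        · rw [← hu'] at h; omega
      have hlt' : ctx.cs.length u' < ctx.cs.length (u' * ctx.cs.simple b) := by
        have h1 : u' * ctx.cs.simple b = ctx.cs.simple c * (u * ctx.cs.simple b) := by
          rw [hu', mul_assoc]
        rcases ctx.cs.length_simple_mul (u * ctx.cs.simple b) c with h | h <;>
          rw [← h1] at h <;> omega
      have hpos' := ih (ctx.cs.length u') (by omega) u' b rfl hlt'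
      rcases eq_or_ne (ctx.act u' (ctx.idx b : V)) (ctx.idx c : V) with he | he
      · exfalso
        have hconj := ctx.conj_simple_of_act_eq he
        have husb : u * ctx.cs.simple b = u' := by
          calc u * ctx.cs.simple b = ctx.cs.simple c * (u' * ctx.cs.simple b) := by
                rw [huu', mul_assoc]
            _ = ctx.cs.simple c * ((u' * ctx.cs.simple b * u'⁻¹) * u') := by
                group
            _ = ctx.cs.simple c * (ctx.cs.simple c * u') := by rw [hconj]
            _ = u' := by rw [ctx.cs.simple_mul_simple_cancel_left]
        rw [husb] at hlt
        omega
      · rw [huu', ctx.act_mul_apply]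
        exact (ctx.simple_reflect_pos c hpos' he).1

lemma length_lt_of_pos (u : W) (b : B)
    (h : ctx.act u (ctx.idx b : V) ∈ ctx.Φpos) :
    ctx.cs.length u < ctx.cs.length (u * ctx.cs.simple b) := by
  by_contra hcon
  push_neg at hcon
  have hne := ctx.cs.length_mul_simple_ne u b
  have hlt : ctx.cs.length (u * ctx.cs.simple b) < ctx.cs.length u :=
    lt_of_le_of_ne hcon hne
  have h2 : ctx.cs.length (u * ctx.cs.simple b) <
      ctx.cs.length ((u * ctx.cs.simple b) * ctx.cs.simple b) := by
    rw [ctx.cs.simple_mul_simple_cancel_right]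
    exact hlt
  have h3 := ctx.pos_of_length_lt _ (u * ctx.cs.simple b) b rfl h2
  have h4 : ctx.act (u * ctx.cs.simple b) (ctx.idx b : V)
      = -(ctx.act u (ctx.idx b : V)) := by
    rw [ctx.act_mul_apply, ctx.act_simple_self, map_neg]
  rw [h4] at h3
  exact ctx.neg_not_pos h h3

/-- The span of the simple roots indexed by `I`. -/
def spanI (I : Finset B) : Submodule ℚ V :=
  Submodule.span ℚ {x : V | ∃ c ∈ I, x = (ctx.idx c : V)}

lemma parab_act_pos (I : Finset B) {u : W} (hu : u ∈ ctx.parabolic I) :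
    ∀ β ∈ ctx.Φpos, β ∉ ctx.spanI I →
      ctx.act u β ∈ ctx.Φpos ∧ ctx.act u β ∉ ctx.spanI I := by
  set P : W → Prop := fun u => ∀ β ∈ ctx.Φpos, β ∉ ctx.spanI I →
      ctx.act u β ∈ ctx.Φpos ∧ ctx.act u β ∉ ctx.spanI I with hP
  have hgen : ∀ c ∈ I, P (ctx.cs.simple c) := by
    intro c hc β hβ hβs
    have hαc : (ctx.idx c : V) ∈ ctx.spanI I :=
      Submodule.subset_span ⟨c, hc, rfl⟩
    have hne : β ≠ (ctx.idx c : V) := fun h => hβs (h ▸ hαc)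
    refine ⟨(ctx.simple_reflect_pos c hβ hne).1, ?_⟩
    intro hmem
    apply hβs
    have hform : ctx.act (ctx.cs.simple c) β
        = β - ctx.coroot (ctx.idx c : V) β • (ctx.idx c : V) := ctx.act_simple c β
    have : β = ctx.act (ctx.cs.simple c) β
        + ctx.coroot (ctx.idx c : V) β • (ctx.idx c : V) := by rw [hform]; abel
    rw [this]
    exact Submodule.add_mem _ hmem (Submodule.smul_mem _ _ hαc)
  suffices h : P u ∧ P u⁻¹ from h.1
  induction hu using Subgroup.closure_induction with
  | mem x hx =>
    obtain ⟨c, hc, rfl⟩ := hx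
    have := hgen c hc
    refine ⟨this, ?_⟩
    rw [ctx.cs.inv_simple]
    exact this
  | one =>
    constructor <;> intro β hβ hβs <;>
      simp only [inv_one, map_one, LinearEquiv.coe_one, id_eq] <;> exact ⟨hβ, hβs⟩
  | mul x y hx hy ihx ihy =>
    constructor
    · intro β hβ hβs
      rw [ctx.act_mul_apply]
      obtain ⟨h1, h2⟩ := ihy.1 β hβ hβs
      exact ihx.1 _ h1 h2
    · intro β hβ hβs
      rw [mul_inv_rev, ctx.act_mul_apply]
      obtain ⟨h1, h2⟩ := ihx.2 β hβ hβs
      exact ihy.2 _ h1 h2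
  | inv x hx ihx =>
    refine ⟨ihx.2, ?_⟩
    rw [inv_inv]
    exact ihx.1

lemma simple_root_mem_spanI {I : Finset B} {b : B}
    (h : (ctx.idx b : V) ∈ ctx.spanI I) : b ∈ I := by
  by_contra hbI
  have hker : ctx.spanI I ≤ LinearMap.ker (ctx.bV.coord (ctx.idx b)) := by
    rw [spanI, Submodule.span_le]
    rintro x ⟨c, hc, rfl⟩
    have hbc : ctx.idx c ≠ ctx.idx b := by
      intro h'
      exact hbI (by rwa [ctx.idx.injective h'] at hc)
    have : (ctx.idx c : V) = ctx.bV (ctx.idx c) := by simp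
    simp only [SetLike.mem_coe, LinearMap.mem_ker, Module.Basis.coord_apply]
    rw [this, ctx.bV.repr_self]
    exact Finsupp.single_eq_of_ne hbc.symm
  have h1 := hker h
  rw [LinearMap.mem_ker, Module.Basis.coord_apply] at h1
  have : (ctx.idx b : V) = ctx.bV (ctx.idx b) := by simp
  rw [this, ctx.bV.repr_self, Finsupp.single_eq_same] at h1
  norm_num at h1

lemma letters_mem_parabolic (I : Finset B) :
    ∀ ω : List B, ctx.cs.IsReduced ω → ctx.cs.wordProd ω ∈ ctx.parabolic I →
      ∀ b ∈ ω, ctx.cs.simple b ∈ ctx.parabolic I := by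
  intro ω
  induction ω with
  | nil => intro _ _ b hb; simp at hb
  | cons b rest ih =>
    intro hred hmem b' hb'
    set w := ctx.cs.wordProd (b :: rest) with hw
    have hlenw : ctx.cs.length w = rest.length + 1 := by
      rw [hw]
      exact hred.trans (by simp)
    have hredrest : ctx.cs.IsReduced rest := by
      have := CoxeterSystem.IsReduced.drop hred 1
      simpa using this
    have hsw : ctx.cs.simple b * w = ctx.cs.wordProd rest := by
      rw [hw, ctx.cs.wordProd_cons, ctx.cs.simple_mul_simple_cancel_left]
    have hlsw : ctx.cs.length (ctx.cs.simple b * w) = rest.length := by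
      rw [hsw]; exact hredrest
    -- show s b ∈ parabolic I
    have hsb : ctx.cs.simple b ∈ ctx.parabolic I := by
      have hninv : ¬ ctx.cs.length w⁻¹ < ctx.cs.length (w⁻¹ * ctx.cs.simple b) := by
        have he : (w⁻¹ * ctx.cs.simple b)⁻¹ = ctx.cs.simple b * w := by
          rw [mul_inv_rev, inv_inv, ctx.cs.inv_simple]
        have h1 : ctx.cs.length (w⁻¹ * ctx.cs.simple b) = rest.length := by
          rw [← ctx.cs.length_inv, he, hlsw]
        rw [h1, ctx.cs.length_inv, hlenw]
        omega
      have hnpos : ctx.act w⁻¹ (ctx.idx b : V) ∉ ctx.Φpos := by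
        intro hpos
        exact hninv (ctx.length_lt_of_pos w⁻¹ b hpos)
      have hspan : (ctx.idx b : V) ∈ ctx.spanI I := by
        by_contra hns
        have := ctx.parab_act_pos I ((ctx.parabolic I).inv_mem hmem)
          (ctx.idx b : V) (ctx.simple_root_pos b) hns
        exact hnpos this.1
      have hbI := ctx.simple_root_mem_spanI hspan
      exact Subgroup.subset_closure ⟨b, hbI, rfl⟩
    rcases List.mem_cons.mp hb' with rfl | h'
    · exact hsb
    · apply ih hredrest ?_ b' h'
      rw [← hsw]
      exact mul_mem hsb hmem

end RootCtx

end Aux4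
section Aux5

namespace RootCtx

variable {V B W : Type} [AddCommGroup V] [Module ℚ V] [Group W] {M : CoxeterMatrix B}
variable (ctx : RootCtx V B W M)

lemma qΛ_noZeroDivisors : NoZeroDivisors ctx.QΛ := by
  haveI : TwoUniqueSums ↥ctx.Λ :=
    TwoUniqueSums.of_injective_addHom ctx.Λ.subtype.toAddHom Subtype.val_injective
      inferInstance
  infer_instance

lemma e_def (x : ↥ctx.Λ) : ctx.e x = AddMonoidAlgebra.single x (1 : ℚ) := rfl

lemma e_add (x y : ↥ctx.Λ) : ctx.e (x + y) = ctx.e x * ctx.e y := by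
  rw [e_def, e_def, e_def, AddMonoidAlgebra.single_mul_single, mul_one]

lemma one_sub_e_ne_zero {x : ↥ctx.Λ} (hx : x ≠ 0) : (1 : ctx.QΛ) - ctx.e x ≠ 0 := by
  intro h
  rw [sub_eq_zero] at h
  rw [e_def] at h
  rw [AddMonoidAlgebra.one_def] at h
  rcases AddMonoidAlgebra.single_inj.mp h with ⟨h1, _⟩ | ⟨h1, _⟩
  · exact hx h1.symm
  · norm_num at h1

lemma simpleRoot_ne_zero (b : B) : ctx.simpleRoot b ≠ 0 := by
  intro h
  apply ctx.simple_root_ne_zero b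
  exact congrArg Subtype.val h

lemma wact_e (w : W) (x : ↥ctx.Λ) : ctx.wact w (ctx.e x) = ctx.e (ctx.actΛ w x) := by
  rw [e_def, e_def]
  exact AddMonoidAlgebra.domCongr_single (ctx.actΛ w) x 1

lemma actΛ_simple_neg_ρ (b : B) :
    ctx.actΛ (ctx.cs.simple b) (-ctx.ρΛ) = ctx.simpleRoot b + -ctx.ρΛ := by
  apply Subtype.ext
  show ctx.act (ctx.cs.simple b) (-ctx.ρ) = (ctx.idx b : V) + -ctx.ρ
  rw [map_neg, ctx.ρ_reflect b]
  abel

lemma demazure_fix {b : B} {Lb : ctx.QΛ →ₗ[ℚ] ctx.QΛ} (hLb : ctx.IsDemazure b Lb)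
    {r : ctx.QΛ} (hrb : ctx.wact (ctx.cs.simple b) r = r) :
    Lb (r * ctx.e (-ctx.ρΛ)) = r * ctx.e (-ctx.ρΛ) := by
  have key := hLb (r * ctx.e (-ctx.ρΛ))
  have hw : ctx.wact (ctx.cs.simple b) (r * ctx.e (-ctx.ρΛ))
      = r * (ctx.e (ctx.simpleRoot b) * ctx.e (-ctx.ρΛ)) := by
    rw [map_mul, hrb, ctx.wact_e, ctx.actΛ_simple_neg_ρ, ctx.e_add]
  rw [hw] at key
  have key2 : (1 - ctx.e (ctx.simpleRoot b)) * Lb (r * ctx.e (-ctx.ρΛ))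
      = (1 - ctx.e (ctx.simpleRoot b)) * (r * ctx.e (-ctx.ρΛ)) := by
    rw [key]; ring
  haveI := ctx.qΛ_noZeroDivisors
  exact mul_left_cancel₀ (ctx.one_sub_e_ne_zero (ctx.simpleRoot_ne_zero b)) key2

lemma Lword_cons (L : B → ctx.QΛ →ₗ[ℚ] ctx.QΛ) (b : B) (ω : List B) (f : ctx.QΛ) :
    ctx.Lword L (b :: ω) f = L b (ctx.Lword L ω f) := rfl

lemma Lword_fix (L : B → ctx.QΛ →ₗ[ℚ] ctx.QΛ) (hL : ∀ b : B, ctx.IsDemazure b (L b))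
    {r : ctx.QΛ} (ω : List B)
    (h : ∀ b ∈ ω, ctx.wact (ctx.cs.simple b) r = r) :
    ctx.Lword L ω (r * ctx.e (-ctx.ρΛ)) = r * ctx.e (-ctx.ρΛ) := by
  induction ω with
  | nil => rfl
  | cons b ω' ih =>
    rw [ctx.Lword_cons, ih (fun b' hb' => h b' (List.mem_cons_of_mem b hb'))]
    exact ctx.demazure_fix (hL b) (h b List.mem_cons_self)

end RootCtx

end Aux5

/-- for `I ⊆ Δ` (encoded by the index set `I : Finset B` of simple roots),
`r ∈ ℚ[Λ]` invariant under `W_I`, `v ∈ W` and `w' ∈ W_I` with `ℓ(v·w') = ℓ(v) + ℓ(w')`,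
one has `L_v(L_{w'}(r · e^{−ρ})) = L_v(r · e^{−ρ})` for any reduced words for `v` and `w'`. -/
theorem stmt10 {V B W : Type} [AddCommGroup V] [Module ℚ V] [Group W] {M : CoxeterMatrix B}
    (ctx : RootCtx V B W M)
    (L : B → ctx.QΛ →ₗ[ℚ] ctx.QΛ) (hL : ∀ b : B, ctx.IsDemazure b (L b))
    (I : Finset B) (r : ctx.QΛ)
    (hr : ∀ u ∈ ctx.parabolic I, ctx.wact u r = r)
    (v w' : W) (hw' : w' ∈ ctx.parabolic I)
    (hlen : ctx.cs.length (v * w') = ctx.cs.length v + ctx.cs.length w') :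
    ∀ ωv ωw : List B,
      ctx.cs.IsReduced ωv → ctx.cs.wordProd ωv = v →
      ctx.cs.IsReduced ωw → ctx.cs.wordProd ωw = w' →
      ctx.Lword L ωv (ctx.Lword L ωw (r * ctx.e (-ctx.ρΛ))) =
        ctx.Lword L ωv (r * ctx.e (-ctx.ρΛ)) := by
  intro ωv ωw _ _ hw1 hw2
  have hletters := ctx.letters_mem_parabolic I ωw hw1 (by rw [hw2]; exact hw')
  have hfix : ctx.Lword L ωw (r * ctx.e (-ctx.ρΛ)) = r * ctx.e (-ctx.ρΛ) :=
    ctx.Lword_fix L hL ωw (fun b hb => hr (ctx.cs.simple b) (hletters b hb))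
  rw [hfix]
end
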